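/- Let M be a 3-connected matroid that is not a wheel or a whirl, and let F = (e_1, e_2, …, e_{|F|}) be a maximal fan of M with |F| ≥ 3. If {e_1, e_2, e_3} is a triad, then e_1 is not contained in any triangle of M; dually, if {e_1, e_2, e_3} is a triangle, then e_1 is not contained in any triad of M. -/

import Mathlib

open Matroid Set

namespace DetPairs

variable {α : Type*}

/-- The rank of a set in a matroid: the maximum size of an independent subset
(as an integer, for convenient arithmetic). -/
noncomputable def r (M : Matroid α) (X : Set α) : ℤ :=
  ((sSup (Set.ncard '' {I | M.Indep I ∧ I ⊆ X}) : ℕ) : ℤ)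

/-- The connectivity function `λ_M(X) = r(X) + r(E − X) − r(M)`. -/
noncomputable def lam (M : Matroid α) (X : Set α) : ℤ :=
  r M X + r M (M.E \ X) - r M M.E

/-- Local connectivity `⊓(X,Y) = r(X) + r(Y) − r(X ∪ Y)`. -/
noncomputable def localConn (M : Matroid α) (X Y : Set α) : ℤ :=
  r M X + r M Y - r M (X ∪ Y)

/-- A circuit: a minimal dependent set. -/
def Circuit (M : Matroid α) (C : Set α) : Prop :=
  C ⊆ M.E ∧ ¬ M.Indep C ∧ ∀ D, D ⊂ C → M.Indep D

/-- A cocircuit: a circuit of the dual. -/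
def Cocircuit (M : Matroid α) (C : Set α) : Prop := Circuit M✶ C

/-- A triangle: a 3-element circuit. -/
def Triangle (M : Matroid α) (T : Set α) : Prop := Circuit M T ∧ T.ncard = 3

/-- A triad: a 3-element cocircuit. -/
def Triad (M : Matroid α) (T : Set α) : Prop := Cocircuit M T ∧ T.ncard = 3

/-- A quad: a 4-element set that is both a circuit and a cocircuit. -/
def Quad (M : Matroid α) (Q : Set α) : Prop :=
  Circuit M Q ∧ Cocircuit M Q ∧ Q.ncard = 4

/-- Deletion of a set of elements. -/
def Del (M : Matroid α) (D : Set α) : Matroid α := M ↾ (M.E \ D)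

/-- Contraction of a set of elements. -/
def Con (M : Matroid α) (C : Set α) : Matroid α := (M✶ ↾ (M.E \ C))✶

/-- `M` is 3-connected: it has no `k`-separation for `k = 1, 2`, where a
`k`-separation is a set `X` with `λ(X) = k − 1`, `|X| ≥ k` and `|E − X| ≥ k`. -/
def ThreeConnected (M : Matroid α) : Prop :=
  ∀ k : ℕ, 0 < k → k < 3 → ∀ X ⊆ M.E,
    ¬ (lam M X = (k : ℤ) - 1 ∧ (k : ℤ) ≤ X.ncard ∧ (k : ℤ) ≤ (M.E \ X).ncard)

/-- A detachable pair: distinct elements `e, f` such that `M \ e \ f` or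
`M / e / f` is 3-connected. -/
def DetachablePair (M : Matroid α) (e f : α) : Prop :=
  e ≠ f ∧ e ∈ M.E ∧ f ∈ M.E ∧
    (ThreeConnected (Del M {e, f}) ∨ ThreeConnected (Con M {e, f}))

/-- The triple of elements with indices `i, i+1, i+2` in an ordering. -/
def tri (e : ℕ → α) (i : ℕ) : Set α := {e i, e (i + 1), e (i + 2)}

/-- `(e 0, …, e (n-1))` is a fan ordering of length `n ≥ 3` in `M`:
consecutive triples alternate between triangles and triads. -/
def FanOrd (M : Matroid α) (n : ℕ) (e : ℕ → α) : Prop :=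
  3 ≤ n ∧ Set.InjOn e (Set.Iio n) ∧ (∀ i < n, e i ∈ M.E) ∧
    (Triangle M (tri e 0) ∨ Triad M (tri e 0)) ∧
    ∀ i, i + 3 < n →
      (Triangle M (tri e i) → Triad M (tri e (i + 1))) ∧
      (Triad M (tri e i) → Triangle M (tri e (i + 1)))

/-- A fan (as a set): either a 2-element subset of the ground set, or the
underlying set of a fan ordering of length at least 3. -/
def IsFan (M : Matroid α) (F : Set α) : Prop :=
  (F ⊆ M.E ∧ F.ncard = 2) ∨ ∃ n e, FanOrd M n e ∧ F = e '' Set.Iio n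

/-- A maximal fan: a fan contained in no strictly larger fan. -/
def MaximalFan (M : Matroid α) (F : Set α) : Prop :=
  IsFan M F ∧ ∀ F', IsFan M F' → F ⊆ F' → F' = F

/-- `M` is a wheel or a whirl: its ground set has a cyclic ordering of even size
`2n` in which consecutive triples alternate between triangles and triads. -/
def IsWheelOrWhirl (M : Matroid α) : Prop :=
  ∃ (n : ℕ) (e : ℕ → α), 2 ≤ n ∧ Set.InjOn e (Set.Iio (2 * n)) ∧
    M.E = e '' Set.Iio (2 * n) ∧
    ∀ i < 2 * n,
      (i % 2 = 0 → Triangle M {e i, e ((i + 1) % (2 * n)), e ((i + 2) % (2 * n))}) ∧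
      (i % 2 = 1 → Triad M {e i, e ((i + 1) % (2 * n)), e ((i + 2) % (2 * n))})

/-- An `M(K₄)`-separator: a 6-element set `{a,b,c,x,y,z}` where `{x,y,z}` is a
triad and `{a,b,c}`, `{a,x,y}`, `{b,x,z}`, `{c,y,z}` are triangles. -/
def MK4Sep (M : Matroid α) (S : Set α) : Prop :=
  ∃ a b c x y z : α, S = {a, b, c, x, y, z} ∧ S.ncard = 6 ∧
    Triad M {x, y, z} ∧ Triangle M {a, b, c} ∧ Triangle M {a, x, y} ∧
    Triangle M {b, x, z} ∧ Triangle M {c, y, z}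

/-- A vertical 3-separation `(X, {e}, Y)` of `M`. -/
def VertThreeSep (M : Matroid α) (X : Set α) (e : α) (Y : Set α) : Prop :=
  X ∪ {e} ∪ Y = M.E ∧ Disjoint X Y ∧ e ∉ X ∧ e ∉ Y ∧
    lam M X = 2 ∧ lam M Y = 2 ∧ e ∈ M.closure X ∧ e ∈ M.closure Y ∧
    3 ≤ r M X ∧ 3 ≤ r M Y

/-- `N` is a simplification of `M`: a restriction of `M` to a set of
representatives, one from each parallel class of nonloops. -/
def SimplificationOf (M N : Matroid α) : Prop :=
  ∃ X : Set α, (∀ x ∈ X, x ∈ M.E ∧ x ∉ M.closure ∅) ∧ N = M ↾ X ∧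
    ∀ y ∈ M.E, y ∉ M.closure ∅ →
      ∃! x, x ∈ X ∧ M.closure {y} = M.closure {x}


/-! ### Rank API -/

section RankAPI

variable {M : Matroid α} {X Y I J C D : Set α} {x y : α}

lemma bddAbove_cards (M : Matroid α) [M.Finite] (X : Set α) :
    BddAbove (Set.ncard '' {I | M.Indep I ∧ I ⊆ X}) := by
  refine ⟨M.E.ncard, ?_⟩
  rintro m ⟨I, ⟨hI, -⟩, rfl⟩
  exact Set.ncard_le_ncard hI.subset_ground M.ground_finite

lemma le_r [M.Finite] (hI : M.Indep I) (hIX : I ⊆ X) : (I.ncard : ℤ) ≤ r M X := by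
  have : I.ncard ≤ sSup (Set.ncard '' {I | M.Indep I ∧ I ⊆ X}) :=
    le_csSup (bddAbove_cards M X) ⟨I, ⟨hI, hIX⟩, rfl⟩
  unfold r
  exact_mod_cast this

lemma r_eq_basis' [M.Finite] (h : M.IsBasis' I X) : r M X = (I.ncard : ℤ) := by
  refine le_antisymm ?_ (le_r h.indep h.subset)
  have hub : ∀ m ∈ Set.ncard '' {J | M.Indep J ∧ J ⊆ X}, m ≤ I.ncard := by
    rintro m ⟨J, ⟨hJ, hJX⟩, rfl⟩
    by_contra hlt
    push_neg at hlt
    have henc : I.encard < J.encard := by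
      rw [← (M.set_finite I h.indep.subset_ground).cast_ncard_eq,
        ← (M.set_finite J hJ.subset_ground).cast_ncard_eq]
      exact_mod_cast hlt
    obtain ⟨z, hzJI, hzind⟩ := h.indep.augment hJ henc
    exact h.insert_not_indep ⟨hJX hzJI.1, hzJI.2⟩ hzind
  have : sSup (Set.ncard '' {J | M.Indep J ∧ J ⊆ X}) ≤ I.ncard :=
    csSup_le ⟨0, ⟨∅, ⟨M.empty_indep, Set.empty_subset X⟩, by simp⟩⟩ hub
  unfold r
  exact_mod_cast this

lemma exists_r_basis' (M : Matroid α) [M.Finite] (X : Set α) :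
    ∃ I, M.IsBasis' I X ∧ r M X = (I.ncard : ℤ) := by
  obtain ⟨I, hI⟩ := M.exists_isBasis' X
  exact ⟨I, hI, r_eq_basis' hI⟩

lemma r_indep [M.Finite] (hI : M.Indep I) : r M I = (I.ncard : ℤ) :=
  r_eq_basis' hI.isBasis_self.isBasis'

@[simp] lemma r_empty (M : Matroid α) [M.Finite] : r M ∅ = 0 := by
  simpa using r_indep M.empty_indep

lemma r_nonneg (M : Matroid α) [M.Finite] (X : Set α) : 0 ≤ r M X := by
  obtain ⟨I, -, hr⟩ := exists_r_basis' M X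
  rw [hr]; positivity

lemma r_mono [M.Finite] (hXY : X ⊆ Y) : r M X ≤ r M Y := by
  obtain ⟨I, hI, hr⟩ := exists_r_basis' M X
  rw [hr]
  exact le_r hI.indep (hI.subset.trans hXY)

lemma r_le_ncard [M.Finite] (hX : X ⊆ M.E) : r M X ≤ (X.ncard : ℤ) := by
  obtain ⟨I, hI, hr⟩ := exists_r_basis' M X
  rw [hr]
  exact_mod_cast Set.ncard_le_ncard hI.subset (M.set_finite X hX)

lemma r_dep [M.Finite] (hX : X ⊆ M.E) (hd : ¬ M.Indep X) : r M X ≤ (X.ncard : ℤ) - 1 := by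
  obtain ⟨I, hI, hr⟩ := exists_r_basis' M X
  have hss : I ⊂ X := by
    refine ⟨hI.subset, fun hXI => hd ?_⟩
    have : I = X := subset_antisymm hI.subset hXI
    exact this ▸ hI.indep
  have : I.ncard < X.ncard := Set.ncard_lt_ncard hss (M.set_finite X hX)
  rw [hr]; omega

lemma indep_of_r [M.Finite] (hX : X ⊆ M.E) (h : (X.ncard : ℤ) ≤ r M X) : M.Indep X := by
  by_contra hd
  have := r_dep hX hd
  omega

lemma r_union_le (M : Matroid α) [M.Finite] (X Y : Set α) :
    r M (X ∪ Y) ≤ r M X + r M Y := by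
  obtain ⟨I, hI, hr⟩ := exists_r_basis' M (X ∪ Y)
  have h1 : (I ∩ X).ncard + (I \ X).ncard = I.ncard :=
    Set.ncard_inter_add_ncard_diff_eq_ncard I X (M.set_finite I hI.indep.subset_ground)
  have h2 : ((I ∩ X).ncard : ℤ) ≤ r M X := le_r (hI.indep.inter_right X) Set.inter_subset_right
  have h3 : ((I \ X).ncard : ℤ) ≤ r M Y := by
    refine le_r (hI.indep.diff X) fun z hz => ?_
    rcases hI.subset hz.1 with h | h
    · exact absurd h hz.2
    · exact h
  rw [hr]
  omega

lemma r_eq_of_subset_closure [M.Finite] (hXY : X ⊆ Y) (hYcl : Y ⊆ M.closure X) :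
    r M Y = r M X := by
  have hXE : X ⊆ M.E := fun z hz => M.closure_subset_ground X (hYcl (hXY hz))
  obtain ⟨I, hI⟩ := M.exists_isBasis X hXE
  have hIY : M.IsBasis I Y := by
    rw [isBasis_iff_indep_subset_closure]
    exact ⟨hI.indep, hI.subset.trans hXY,
      fun z hz => by rw [hI.closure_eq_closure]; exact hYcl hz⟩
  rw [r_eq_basis' hIY.isBasis', r_eq_basis' hI.isBasis']

lemma r_le_of_subset_closure [M.Finite] (hB : Y ⊆ M.E) (hX : X ⊆ M.closure Y) :
    r M X ≤ r M Y := by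
  have h1 : r M (Y ∪ X) = r M Y := r_eq_of_subset_closure Set.subset_union_left
    (Set.union_subset (M.subset_closure Y hB) hX)
  calc r M X ≤ r M (Y ∪ X) := r_mono Set.subset_union_right
  _ = r M Y := h1

lemma r_insert_le (M : Matroid α) [M.Finite] (y : α) (X : Set α) :
    r M (insert y X) ≤ r M X + 1 := by
  have : insert y X = X ∪ {y} := by rw [Set.union_singleton]
  rw [this]
  have h1 := r_union_le M X {y}
  have h2 : r M {y} ≤ 1 := by
    obtain ⟨I, hI, hr⟩ := exists_r_basis' M {y}
    have : I.ncard ≤ ({y} : Set α).ncard := Set.ncard_le_ncard hI.subset (Set.finite_singleton y)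
    simp only [Set.ncard_singleton] at this
    rw [hr]; exact_mod_cast this
  omega

lemma r_union_eq_of_subset_closure [M.Finite] (hX : X ⊆ M.E) (hY : Y ⊆ M.closure X) :
    r M (X ∪ Y) = r M X :=
  r_eq_of_subset_closure Set.subset_union_left
    (Set.union_subset (M.subset_closure X hX) hY)

lemma r_insert_of_mem_closure [M.Finite] (hX : X ⊆ M.E) (h : y ∈ M.closure X) :
    r M (insert y X) = r M X := by
  rw [← Set.union_singleton]
  exact r_union_eq_of_subset_closure hX (by simpa using h)

end RankAPI

/-! ### Dual rank, connectivity, circuits -/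

section Part2

variable {M : Matroid α} {X Y I J C D B : Set α} {x y : α}

lemma rE_base [M.Finite] (hB : M.IsBase B) : r M M.E = (B.ncard : ℤ) :=
  r_eq_basis' hB.isBasis_ground.isBasis'

lemma r_dual [M.Finite] (hX : X ⊆ M.E) :
    r M✶ X = (X.ncard : ℤ) + r M (M.E \ X) - r M M.E := by
  have hfin : ∀ Y : Set α, Y ⊆ M.E → Y.Finite := fun Y hY => M.set_finite Y hY
  refine le_antisymm ?_ ?_
  · -- ≤ : take a dual basis J of X, a base B of M disjoint from J
    obtain ⟨J, hJ, hr⟩ := exists_r_basis' M✶ X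
    obtain ⟨hJE, B, hB, hdisj⟩ := dual_indep_iff_exists'.1 hJ.indep
    have hBX : B ∩ X ⊆ X \ J := fun z hz => ⟨hz.2, fun hzJ => hdisj.ne_of_mem hzJ hz.1 rfl⟩
    have h1 : ((B \ X).ncard : ℤ) ≤ r M (M.E \ X) := by
      refine le_r (hB.indep.diff X) fun z hz => ⟨hB.subset_ground hz.1, hz.2⟩
    have h2 : (B ∩ X).ncard + (B \ X).ncard = B.ncard :=
      Set.ncard_inter_add_ncard_diff_eq_ncard B X (hfin B hB.subset_ground)
    have h3 : (X ∩ J).ncard + (X \ J).ncard = X.ncard :=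
      Set.ncard_inter_add_ncard_diff_eq_ncard X J (hfin X hX)
    have h4 : (B ∩ X).ncard ≤ (X \ J).ncard :=
      Set.ncard_le_ncard hBX (hfin _ (Set.diff_subset.trans hX))
    have h5 : (X ∩ J).ncard = J.ncard := by
      rw [Set.inter_eq_self_of_subset_right hJ.subset]
    have h6 := rE_base hB
    rw [hr, h6]
    omega
  · -- ≥ : basis I of E \ X extends to a base B, and X \ B is dual-independent
    obtain ⟨I, hI⟩ := M.exists_isBasis (M.E \ X) Set.diff_subset
    obtain ⟨B, hB, hIB⟩ := hI.indep.exists_isBase_superset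
    have hBI : B ∩ (M.E \ X) = I := by
      refine (hI.eq_of_subset_indep (hB.indep.inter_right _)
        (Set.subset_inter hIB hI.subset) Set.inter_subset_right).symm
    have hdual : M✶.Indep (X \ B) := by
      rw [dual_indep_iff_exists' ]
      exact ⟨Set.diff_subset.trans hX, B, hB, disjoint_sdiff_left⟩
    have h1 : ((X \ B).ncard : ℤ) ≤ r M✶ X := le_r hdual Set.diff_subset
    have h2 : (X ∩ B).ncard + (X \ B).ncard = X.ncard :=
      Set.ncard_inter_add_ncard_diff_eq_ncard X B (hfin X hX)
    have h3 : (B ∩ X).ncard + (B \ X).ncard = B.ncard :=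
      Set.ncard_inter_add_ncard_diff_eq_ncard B X (hfin B hB.subset_ground)
    have h4 : B \ X = I := by
      rw [← hBI]
      ext z
      exact ⟨fun hz => ⟨hz.1, hB.subset_ground hz.1, hz.2⟩, fun hz => ⟨hz.1, hz.2.2⟩⟩
    have h5 : (X ∩ B).ncard = (B ∩ X).ncard := by rw [Set.inter_comm]
    have h4' : (B \ X).ncard = I.ncard := by rw [h4]
    have h6 := rE_base hB
    have h7 : r M (M.E \ X) = (I.ncard : ℤ) := r_eq_basis' hI.isBasis'
    rw [h6, h7]
    omega

lemma r_dual_ground (M : Matroid α) [M.Finite] :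
    r M✶ M.E = (M.E.ncard : ℤ) - r M M.E := by
  have := r_dual (M := M) (Set.Subset.refl M.E)
  simpa using this

lemma lam_nonneg (M : Matroid α) [M.Finite] (hX : X ⊆ M.E) : 0 ≤ lam M X := by
  have h1 : r M M.E ≤ r M X + r M (M.E \ X) := by
    have := r_union_le M X (M.E \ X)
    rwa [Set.union_diff_cancel hX] at this
  unfold lam
  omega

lemma lam_dual [M.Finite] (hX : X ⊆ M.E) : lam M✶ X = lam M X := by
  have h1 : r M✶ X = (X.ncard : ℤ) + r M (M.E \ X) - r M M.E := r_dual hX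
  have h2 : r M✶ (M.E \ X) = ((M.E \ X).ncard : ℤ) + r M X - r M M.E := by
    have := r_dual (M := M) (Set.diff_subset (s := M.E) (t := X))
    rwa [Set.diff_diff_cancel_left hX] at this
  have h3 : r M✶ M.E = (M.E.ncard : ℤ) - r M M.E := r_dual_ground M
  have h4 : (M.E \ X).ncard + X.ncard = M.E.ncard :=
    Set.ncard_diff_add_ncard_of_subset hX M.ground_finite
  unfold lam
  rw [dual_ground, h1, h2, h3]
  omega

lemma lam_compl [M.Finite] (hX : X ⊆ M.E) : lam M (M.E \ X) = lam M X := by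
  unfold lam
  rw [Set.diff_diff_cancel_left hX]
  ring

lemma threeConnected_dual [M.Finite] (hM : ThreeConnected M) : ThreeConnected M✶ := by
  intro k hk hk3 X hXE
  rw [dual_ground] at hXE
  rintro ⟨hlam, h1, h2⟩
  rw [lam_dual hXE] at hlam
  rw [dual_ground] at h2
  exact hM k hk hk3 X hXE ⟨hlam, h1, h2⟩

lemma lam_lb1 [M.Finite] (hM : ThreeConnected M) (hX : X ⊆ M.E)
    (h1 : 1 ≤ X.ncard) (h2 : 1 ≤ (M.E \ X).ncard) : 1 ≤ lam M X := by
  have h0 := lam_nonneg M hX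
  by_contra h
  exact hM 1 one_pos (by norm_num) X hX ⟨by omega, by exact_mod_cast h1, by exact_mod_cast h2⟩

lemma lam_lb2 [M.Finite] (hM : ThreeConnected M) (hX : X ⊆ M.E)
    (h1 : 2 ≤ X.ncard) (h2 : 2 ≤ (M.E \ X).ncard) : 2 ≤ lam M X := by
  have h0 := lam_lb1 hM hX (by omega) (by omega)
  by_contra h
  exact hM 2 two_pos (by norm_num) X hX ⟨by omega, by exact_mod_cast h1, by exact_mod_cast h2⟩

lemma ncard_compl_eq [M.Finite] (hX : X ⊆ M.E) :
    (M.E \ X).ncard = M.E.ncard - X.ncard := by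
  have := Set.ncard_diff_add_ncard_of_subset hX M.ground_finite
  omega

lemma small_indep [M.Finite] (hM : ThreeConnected M) (hE : 4 ≤ M.E.ncard)
    (hX : X ⊆ M.E) (hcard : X.ncard ≤ 2) : M.Indep X := by
  by_contra hd
  have hXfin := M.set_finite X hX
  have hXne : X.ncard ≠ 0 := by
    intro h0
    rw [(Set.ncard_eq_zero hXfin).1 h0] at hd
    exact hd M.empty_indep
  have hr := r_dep hX hd
  have hmono : r M (M.E \ X) ≤ r M M.E := r_mono Set.diff_subset
  have hlam : lam M X ≤ (X.ncard : ℤ) - 1 := by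
    unfold lam; omega
  have hc : (M.E \ X).ncard = M.E.ncard - X.ncard := ncard_compl_eq hX
  have hcase : X.ncard = 1 ∨ X.ncard = 2 := by omega
  rcases hcase with h | h
  · have hge : 1 ≤ lam M X := lam_lb1 hM hX (by omega) (by omega)
    rw [h] at hlam
    push_cast at hlam
    omega
  · have hge : 2 ≤ lam M X := lam_lb2 hM hX (by omega) (by omega)
    rw [h] at hlam
    push_cast at hlam
    omega

lemma min_circuit [M.Finite] (hM : ThreeConnected M) (hE : 4 ≤ M.E.ncard)
    (hC : Circuit M C) : 3 ≤ C.ncard := by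
  by_contra h
  exact hC.2.1 (small_indep hM hE hC.1 (by omega))

lemma circuit_nonempty (hC : Circuit M C) : C.Nonempty := by
  rcases Set.eq_empty_or_nonempty C with h | h
  · exact absurd (h ▸ M.empty_indep) hC.2.1
  · exact h

lemma circuit_diff_indep (hC : Circuit M C) (hx : x ∈ C) : M.Indep (C \ {x}) :=
  hC.2.2 _ ⟨Set.diff_subset, fun h => (h hx).2 rfl⟩

lemma circuit_r [M.Finite] (hC : Circuit M C) : r M C = (C.ncard : ℤ) - 1 := by
  obtain ⟨x, hx⟩ := circuit_nonempty hC
  have hfin := M.set_finite C hC.1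
  have h1 : r M C ≤ (C.ncard : ℤ) - 1 := r_dep hC.1 hC.2.1
  have h2 : ((C \ {x}).ncard : ℤ) ≤ r M C := le_r (circuit_diff_indep hC hx) Set.diff_subset
  have h3 : (C \ {x}).ncard = C.ncard - 1 := by
    rw [Set.ncard_diff_singleton_of_mem hx]
  have h4 : C.ncard ≠ 0 := by
    simp [Set.ncard_eq_zero hfin]
    exact Set.nonempty_iff_ne_empty.1 ⟨x, hx⟩
  omega

lemma circuit_mem_closure (hC : Circuit M C) (hx : x ∈ C) : x ∈ M.closure (C \ {x}) := by
  have hI : M.Indep (C \ {x}) := circuit_diff_indep hC hx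
  have hxn : x ∉ C \ {x} := fun h => h.2 rfl
  have hdep : ¬ M.Indep (insert x (C \ {x})) := by
    rw [Set.insert_diff_singleton, Set.insert_eq_of_mem hx]
    exact hC.2.1
  have := hI.insert_indep_iff_of_notMem hxn
  rw [this] at hdep
  simp only [Set.mem_diff, not_and, not_not] at hdep
  exact hdep (hC.1 hx)

lemma dep_contains_circuit_aux [M.Finite] :
    ∀ N (X : Set α), X.ncard = N → X ⊆ M.E → ¬ M.Indep X → ∃ C, C ⊆ X ∧ Circuit M C := by
  intro N
  induction N using Nat.strong_induction_on with
  | _ N IH =>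
    intro X hN hX hd
    by_cases h : ∀ D, D ⊂ X → M.Indep D
    · exact ⟨X, subset_rfl, hX, hd, h⟩
    · push_neg at h
      obtain ⟨D, hDX, hDdep⟩ := h
      have hlt : D.ncard < N := hN ▸ Set.ncard_lt_ncard hDX (M.set_finite X hX)
      obtain ⟨C, hCD, hC⟩ := IH _ hlt D rfl (hDX.subset.trans hX) hDdep
      exact ⟨C, hCD.trans hDX.subset, hC⟩

lemma dep_contains_circuit [M.Finite] (hX : X ⊆ M.E) (hd : ¬ M.Indep X) :
    ∃ C, C ⊆ X ∧ Circuit M C :=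
  dep_contains_circuit_aux X.ncard X rfl hX hd

lemma circuit_elim [M.Finite] (hC : Circuit M C) (hD : Circuit M D) (hne : C ≠ D)
    (hx : x ∈ C ∩ D) : ∃ C₃, C₃ ⊆ (C ∪ D) \ {x} ∧ Circuit M C₃ := by
  have hfinC := M.set_finite C hC.1
  have hfinD := M.set_finite D hD.1
  -- find f ∈ D \ C
  have hDC : ¬ D ⊆ C := by
    intro hsub
    rcases eq_or_ne D C with h | h
    · exact hne h.symm
    · exact hD.2.1 (hC.2.2 D ⟨hsub, fun h2 => h (subset_antisymm hsub h2)⟩)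
  obtain ⟨f, hfD, hfC⟩ := Set.not_subset.1 hDC
  -- rank bound on C ∪ D
  have hU : r M (C ∪ D) ≤ ((C ∪ D).ncard : ℤ) - 2 := by
    have e1 : C ∪ D = insert f ((C ∪ D) \ {f}) := by
      rw [Set.insert_diff_singleton, Set.insert_eq_of_mem (Set.mem_union_right C hfD)]
    have hcl : f ∈ M.closure ((C ∪ D) \ {f}) :=
      M.closure_subset_closure (Set.diff_subset_diff_left Set.subset_union_right)
        (circuit_mem_closure hD hfD)
    have e2 : r M (C ∪ D) = r M ((C ∪ D) \ {f}) := by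
      conv_lhs => rw [e1]
      exact r_insert_of_mem_closure (fun z hz => by
        rcases hz.1 with h | h
        · exact hC.1 h
        · exact hD.1 h) hcl
    have e3 : (C ∪ D) \ {f} = C ∪ ((D \ C) \ {f}) := by
      ext z
      simp only [Set.mem_diff, Set.mem_union, Set.mem_singleton_iff]
      constructor
      · rintro ⟨h | h, hzf⟩
        · exact Or.inl h
        · by_cases hzC : z ∈ C
          · exact Or.inl hzC
          · exact Or.inr ⟨⟨h, hzC⟩, hzf⟩
      · rintro (h | ⟨⟨h1, h2⟩, h3⟩)
        · exact ⟨Or.inl h, fun hzf => hfC (hzf ▸ h)⟩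
        · exact ⟨Or.inr h1, h3⟩
    have e4 : r M (C ∪ ((D \ C) \ {f})) ≤ r M C + r M ((D \ C) \ {f}) := r_union_le M _ _
    have e5 : r M ((D \ C) \ {f}) ≤ (((D \ C) \ {f}).ncard : ℤ) :=
      r_le_ncard ((Set.diff_subset.trans Set.diff_subset).trans hD.1)
    have e6 : ((D \ C) \ {f}).ncard = (D \ C).ncard - 1 :=
      Set.ncard_diff_singleton_of_mem ⟨hfD, hfC⟩
    have e7 : (C ∪ D).ncard = C.ncard + (D \ C).ncard := by
      rw [← Set.ncard_union_eq disjoint_sdiff_right hfinC (hfinD.diff (t := C)),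
        Set.union_diff_self]
    have e8 : r M C = (C.ncard : ℤ) - 1 := circuit_r hC
    have e9 : 1 ≤ (D \ C).ncard := (Set.ncard_pos (hfinD.diff (t := C))).2 ⟨f, hfD, hfC⟩
    rw [e2, e3]
    omega
  -- hence (C ∪ D) \ {x} is dependent
  have hUE : (C ∪ D) \ {x} ⊆ M.E := fun z hz => by
    rcases hz.1 with h | h
    · exact hC.1 h
    · exact hD.1 h
  have hdep : ¬ M.Indep ((C ∪ D) \ {x}) := by
    intro hind
    have h1 : r M ((C ∪ D) \ {x}) = (((C ∪ D) \ {x}).ncard : ℤ) := r_indep hind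
    have h2 : ((C ∪ D) \ {x}).ncard = (C ∪ D).ncard - 1 :=
      Set.ncard_diff_singleton_of_mem (Set.mem_union_left D hx.1)
    have h3 : r M ((C ∪ D) \ {x}) ≤ r M (C ∪ D) := r_mono Set.diff_subset
    have h4 : 1 ≤ (C ∪ D).ncard :=
      (Set.ncard_pos (hfinC.union hfinD)).2 ⟨x, Set.mem_union_left D hx.1⟩
    omega
  exact dep_contains_circuit hUE hdep

lemma circuit_cocircuit_orth [M.Finite] (hC : Circuit M C) (hD : Cocircuit M D)
    (hxC : x ∈ C) (hxD : x ∈ D) : ∃ y, y ≠ x ∧ y ∈ C ∧ y ∈ D := by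
  by_contra h
  push_neg at h
  have hDE : D ⊆ M.E := hD.1
  have hCE : C ⊆ M.E := hC.1
  have hfinD := M.set_finite D hDE
  have hsub : C \ {x} ⊆ M.E \ D := by
    rintro z ⟨hzC, hzx⟩
    exact ⟨hCE hzC, h z (by simpa using hzx) hzC⟩
  -- dual rank computations
  have h1 : r M✶ D = (D.ncard : ℤ) - 1 := circuit_r hD
  have h2 : r M✶ (D \ {x}) = (D.ncard : ℤ) - 1 := by
    rw [r_indep (circuit_diff_indep hD hxD), Set.ncard_diff_singleton_of_mem hxD]
    have : 1 ≤ D.ncard := Set.ncard_pos hfinD |>.2 ⟨x, hxD⟩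
    omega
  have h3 : r M (M.E \ D) = r M M.E - 1 := by
    have := r_dual (M := M) hDE
    omega
  have h4 : r M (M.E \ (D \ {x})) = r M M.E := by
    have hf := r_dual (M := M) (X := D \ {x}) (Set.diff_subset.trans hDE)
    rw [h2] at hf
    have hc : (D \ {x}).ncard = D.ncard - 1 := Set.ncard_diff_singleton_of_mem hxD
    have hpos : 1 ≤ D.ncard := Set.ncard_pos hfinD |>.2 ⟨x, hxD⟩
    omega
  have h5 : M.E \ (D \ {x}) = insert x (M.E \ D) := by
    ext z
    simp only [Set.mem_diff, Set.mem_insert_iff, Set.mem_singleton_iff]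
    constructor
    · rintro ⟨hzE, hz⟩
      by_cases hzD : z ∈ D
      · left
        by_contra hne
        exact hz ⟨hzD, hne⟩
      · right; exact ⟨hzE, hzD⟩
    · rintro (rfl | ⟨hzE, hzD⟩)
      · exact ⟨hDE hxD, fun hz => hz.2 rfl⟩
      · exact ⟨hzE, fun hz => hzD hz.1⟩
  have hcl : x ∈ M.closure (M.E \ D) :=
    M.closure_subset_closure hsub (circuit_mem_closure hC hxC)
  have h6 : r M (insert x (M.E \ D)) = r M (M.E \ D) :=
    r_insert_of_mem_closure Set.diff_subset hcl
  rw [h5, h6, h3] at h4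
  omega

end Part2

/-! ### Triangles, triads, duality, small cases -/

section Part3

variable {M : Matroid α} {X S T : Set α} {a b c d x y : α}

lemma triangle_dual_iff : Triangle M✶ X ↔ Triad M X := Iff.rfl

lemma triad_dual_iff : Triad M✶ X ↔ Triangle M X := by
  unfold Triad Triangle Cocircuit
  rw [Matroid.dual_dual]

lemma ncard_triple (hab : a ≠ b) (hac : a ≠ c) (hbc : b ≠ c) :
    ({a, b, c} : Set α).ncard = 3 :=
  Set.ncard_eq_three.2 ⟨a, b, c, hab, hac, hbc, rfl⟩

lemma triangle_r [M.Finite] (hT : Triangle M T) : r M T = 2 := by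
  rw [circuit_r hT.1, hT.2]; norm_num

lemma triad_r_compl [M.Finite] (hT : Triad M T) : r M (M.E \ T) = r M M.E - 1 := by
  have h1 : r M✶ T = 2 := by rw [circuit_r hT.1, hT.2]; norm_num
  have h2 := r_dual (M := M) hT.1.1
  rw [hT.2] at h2
  rw [h1] at h2
  push_cast at h2
  omega

lemma all_three_circuit [M.Finite] (hM : ThreeConnected M) (hE4 : M.E.ncard = 4)
    (hr2 : r M M.E ≤ 2) (hS : S ⊆ M.E) (h3 : S.ncard = 3) : Circuit M S := by
  refine ⟨hS, fun hind => ?_, fun D hD => ?_⟩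
  · have := le_r hind (subset_rfl (a := S))
    have h2 := r_mono (M := M) hS
    rw [h3] at this
    push_cast at this
    omega
  · have hDfin : D.Finite := (M.set_finite S hS).subset hD.subset
    have : D.ncard < 3 := h3 ▸ Set.ncard_lt_ncard hD (M.set_finite S hS)
    exact small_indep hM (by omega) (hD.subset.trans hS) (by omega)

lemma mod_succ_inj {N i j : ℕ} (hN : 0 < N) (hi : i < N) (hj : j < N)
    (h : (i + 1) % N = (j + 1) % N) : i = j := by
  rcases Nat.lt_or_ge (i + 1) N with h1 | h1 <;> rcases Nat.lt_or_ge (j + 1) N with h2 | h2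
  · rw [Nat.mod_eq_of_lt h1, Nat.mod_eq_of_lt h2] at h; omega
  · have hj1 : j + 1 = N := by omega
    rw [Nat.mod_eq_of_lt h1, hj1, Nat.mod_self] at h; omega
  · have hi1 : i + 1 = N := by omega
    rw [Nat.mod_eq_of_lt h2, hi1, Nat.mod_self] at h; omega
  · omega

lemma shift_wheel [M.Finite] {m : ℕ} (hm : 2 ≤ m) (f : ℕ → α)
    (hinj : Set.InjOn f (Set.Iio (2 * m))) (hE : M.E = f '' Set.Iio (2 * m))
    (hP : ∀ i < 2 * m,
      (i % 2 = 0 → Triad M {f i, f ((i + 1) % (2 * m)), f ((i + 2) % (2 * m))}) ∧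
      (i % 2 = 1 → Triangle M {f i, f ((i + 1) % (2 * m)), f ((i + 2) % (2 * m))})) :
    IsWheelOrWhirl M := by
  have hNpos : 0 < 2 * m := by omega
  refine ⟨m, fun i => f ((i + 1) % (2 * m)), hm, ?_, ?_, ?_⟩
  · intro i hi j hj hf
    simp only [Set.mem_Iio] at hi hj
    have h1 : (i + 1) % (2 * m) < 2 * m := Nat.mod_lt _ hNpos
    have h2 : (j + 1) % (2 * m) < 2 * m := Nat.mod_lt _ hNpos
    exact mod_succ_inj hNpos hi hj (hinj h1 h2 hf)
  · rw [hE]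
    ext z
    simp only [Set.mem_image, Set.mem_Iio]
    constructor
    · rintro ⟨j, hj, rfl⟩
      refine ⟨if j = 0 then 2 * m - 1 else j - 1, ?_, ?_⟩
      · split <;> omega
      · split
        · subst j
          congr 1
          rw [Nat.sub_add_cancel (by omega), Nat.mod_self]
        · congr 1
          rw [Nat.sub_add_cancel (by omega), Nat.mod_eq_of_lt hj]
    · rintro ⟨i, hi, rfl⟩
      exact ⟨(i + 1) % (2 * m), Nat.mod_lt _ hNpos, rfl⟩
  · intro i hi
    dsimp only
    have e2 : ((i + 1) % (2 * m) + 1) % (2 * m) = (i + 2) % (2 * m) := by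
      rw [Nat.mod_add_mod]
    have e3 : ((i + 2) % (2 * m) + 1) % (2 * m) = (i + 3) % (2 * m) := by
      rw [Nat.mod_add_mod]
    rw [e2, e3]
    rcases Nat.lt_or_ge i (2 * m - 1) with hlt | hge
    · have hj : (i + 1) % (2 * m) = i + 1 := Nat.mod_eq_of_lt (by omega)
      obtain ⟨hP1, hP2⟩ := hP (i + 1) (by omega)
      simp only [show i + 1 + 1 = i + 2 from rfl, show i + 1 + 2 = i + 3 from rfl] at hP1 hP2
      rw [hj]
      exact ⟨fun h0 => hP2 (by omega), fun h1 => hP1 (by omega)⟩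
    · have hiN : i = 2 * m - 1 := by omega
      have hj : (i + 1) % (2 * m) = 0 := by
        rw [hiN, Nat.sub_add_cancel (by omega), Nat.mod_self]
      have hj2 : (i + 2) % (2 * m) = 1 := by
        have h' : i + 2 = 2 * m + 1 := by omega
        rw [h', Nat.add_mod_left, Nat.mod_eq_of_lt (by omega)]
      obtain ⟨hP1, hP2⟩ := hP 0 (by omega)
      have hj3 : (i + 3) % (2 * m) = 2 := by
        have h' : i + 3 = 2 * m + 2 := by omega
        rw [h', Nat.add_mod_left, Nat.mod_eq_of_lt (by omega)]
      rw [hj, hj2, hj3]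
      have h01 : (0 + 1) % (2 * m) = 1 := Nat.mod_eq_of_lt (by omega)
      have h02 : (0 + 2) % (2 * m) = 2 := Nat.mod_eq_of_lt (by omega)
      rw [h01, h02] at hP1 hP2
      exact ⟨fun h0 => absurd (hiN ▸ h0) (by omega), fun _ => hP1 rfl⟩

lemma wheel_dual [M.Finite] (h : IsWheelOrWhirl M✶) : IsWheelOrWhirl M := by
  obtain ⟨m, f, hm, hinj, hE, hP⟩ := h
  rw [dual_ground] at hE
  refine shift_wheel hm f hinj hE fun i hi => ?_
  obtain ⟨hP1, hP2⟩ := hP i hi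
  exact ⟨fun h0 => triangle_dual_iff.1 (hP1 h0), fun h1 => triad_dual_iff.1 (hP2 h1)⟩

lemma both_contra [M.Finite] (hM : ThreeConnected M) (hW : ¬ IsWheelOrWhirl M)
    (hT : Triangle M X) (hD : Triad M X) : False := by
  have hXE : X ⊆ M.E := hT.1.1
  have hX3 : X.ncard = 3 := hT.2
  have hrX : r M X = 2 := triangle_r hT
  have hrc : r M (M.E \ X) = r M M.E - 1 := triad_r_compl hD
  have hlam : lam M X = 1 := by unfold lam; omega
  have hc : (M.E \ X).ncard = M.E.ncard - 3 := by rw [ncard_compl_eq hXE, hX3]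
  have hE3 : 3 ≤ M.E.ncard := by
    have := Set.ncard_le_ncard hXE M.ground_finite
    omega
  rcases Nat.lt_or_ge M.E.ncard 5 with h5 | h5
  swap
  · have := lam_lb2 hM hXE (by omega) (by omega)
    omega
  rcases Nat.lt_or_ge M.E.ncard 4 with h4 | h4
  · -- |E| = 3 : E = X, rank contradiction
    have hEX : X = M.E := Set.eq_of_subset_of_ncard_le hXE (by omega) M.ground_finite
    have h1 : r M✶ X = 2 := by rw [circuit_r hD.1, hD.2]; norm_num
    have h2 := r_dual_ground M
    rw [← hEX] at h2
    rw [h1] at h2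
    rw [hrX, hX3] at h2
    norm_num at h2
  · -- |E| = 4 : M is the whirl U_{2,4}
    have hE4 : M.E.ncard = 4 := by omega
    have hr2 : r M M.E ≤ 2 := by
      have h1 : r M (M.E \ X) ≤ ((M.E \ X).ncard : ℤ) := r_le_ncard Set.diff_subset
      rw [hc, hE4] at h1
      norm_num at h1
      omega
    have hrge : 2 ≤ r M M.E := hrX ▸ r_mono hXE
    have hrE : r M M.E = 2 := le_antisymm hr2 hrge
    have hrdual : r M✶ M✶.E ≤ 2 := by
      rw [dual_ground, r_dual_ground M, hrE, hE4]; norm_num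
    have hMd := threeConnected_dual hM
    have hEd4 : M✶.E.ncard = 4 := by rw [dual_ground]; exact hE4
    -- enumerate the ground set
    obtain ⟨a, b, c, hab, hac, hbc, rfl⟩ := Set.ncard_eq_three.1 hX3
    obtain ⟨d, hd⟩ := Set.ncard_eq_one.1 (by rw [hc, hE4] : (M.E \ {a,b,c}).ncard = 1)
    have hdE : d ∈ M.E := by
      have : d ∈ M.E \ {a,b,c} := hd ▸ rfl
      exact this.1
    have hdX : d ∉ ({a,b,c} : Set α) := by
      have : d ∈ M.E \ {a,b,c} := hd ▸ rfl
      exact this.2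
    have had : a ≠ d := fun h => hdX (by simp [← h])
    have hbd : b ≠ d := fun h => hdX (by simp [← h])
    have hcd : c ≠ d := fun h => hdX (by simp [← h])
    have hEeq : M.E = {a, b, c, d} := by
      have h1 : ({a,b,c} : Set α) ∪ (M.E \ {a,b,c}) = M.E := Set.union_diff_cancel hXE
      rw [hd] at h1
      rw [← h1]
      ext z; simp; tauto
    set f : ℕ → α := fun i => if i = 0 then a else if i = 1 then b else if i = 2 then c else d
      with hf
    have hmem : ∀ i, f i ∈ M.E := by
      intro i
      rw [hEeq, hf]
      dsimp only
      split
      · simp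
      · split
        · simp
        · split
          · simp
          · simp
    have hcirc : ∀ u v w : α, u ≠ v → u ≠ w → v ≠ w → u ∈ M.E → v ∈ M.E → w ∈ M.E →
        Triangle M {u, v, w} ∧ Triad M {u, v, w} := by
      intro u v w h1 h2 h3 hu hv hw
      have hsub : ({u,v,w} : Set α) ⊆ M.E := by
        intro z hz; rcases hz with rfl | rfl | rfl <;> assumption
      have hn3 := ncard_triple h1 h2 h3
      exact ⟨⟨all_three_circuit hM hE4 hr2 hsub hn3, hn3⟩,
        ⟨all_three_circuit hMd hEd4 hrdual (by rw [dual_ground]; exact hsub) hn3, hn3⟩⟩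
    have h0 : f 0 = a := rfl
    have h1' : f 1 = b := by norm_num [hf]
    have h2' : f 2 = c := by norm_num [hf]
    have h3' : f 3 = d := by norm_num [hf]
    refine hW ⟨2, f, le_rfl, ?_, ?_, ?_⟩
    · intro i hi j hj hfij
      simp only [Set.mem_Iio] at hi hj
      interval_cases i <;> interval_cases j <;> (try rfl) <;>
        simp only [h0, h1', h2', h3'] at hfij <;>
        first
          | rfl
          | exact absurd hfij hab | exact absurd hfij hac | exact absurd hfij had
          | exact absurd hfij hbc | exact absurd hfij hbd | exact absurd hfij hcd
          | exact absurd hfij.symm hab | exact absurd hfij.symm hac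
          | exact absurd hfij.symm had | exact absurd hfij.symm hbc
          | exact absurd hfij.symm hbd | exact absurd hfij.symm hcd
    · have hIio : Set.Iio (2 * 2 : ℕ) = {0, 1, 2, 3} := by
        ext i
        simp only [Set.mem_Iio, Set.mem_insert_iff, Set.mem_singleton_iff]
        omega
      rw [hIio, Set.image_insert_eq, Set.image_insert_eq, Set.image_insert_eq,
        Set.image_singleton, hEeq, h0, h1', h2', h3']
    · intro i hi
      interval_cases i
      · refine ⟨fun _ => ?_, fun h => by omega⟩
        have m1 : ((0:ℕ) + 1) % (2 * 2) = 1 := by norm_num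
        have m2 : ((0:ℕ) + 2) % (2 * 2) = 2 := by norm_num
        rw [m1, m2, h0, h1', h2']
        exact (hcirc a b c hab hac hbc (hmem 0) (hmem 1) (hmem 2)).1
      · refine ⟨fun h => by omega, fun _ => ?_⟩
        have m1 : ((1:ℕ) + 1) % (2 * 2) = 2 := by norm_num
        have m2 : ((1:ℕ) + 2) % (2 * 2) = 3 := by norm_num
        rw [m1, m2, h1', h2', h3']
        exact (hcirc b c d hbc hbd hcd (hmem 1) (hmem 2) (hmem 3)).2
      · refine ⟨fun _ => ?_, fun h => by omega⟩
        have m1 : ((2:ℕ) + 1) % (2 * 2) = 3 := by norm_num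
        have m2 : ((2:ℕ) + 2) % (2 * 2) = 0 := by norm_num
        rw [m1, m2, h2', h3', h0]
        exact (hcirc c d a hcd hac.symm had.symm (hmem 2) (hmem 3) (hmem 0)).1
      · refine ⟨fun h => by omega, fun _ => ?_⟩
        have m1 : ((3:ℕ) + 1) % (2 * 2) = 0 := by norm_num
        have m2 : ((3:ℕ) + 2) % (2 * 2) = 1 := by norm_num
        rw [m1, m2, h3', h0, h1']
        exact (hcirc d a b had.symm hbd.symm hab (hmem 3) (hmem 0) (hmem 1)).2

lemma lam_pair_contra [M.Finite] (hM : ThreeConnected M) (hXE : X ⊆ M.E)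
    (h2 : X.ncard = 2) (hE2 : 2 ≤ (M.E \ X).ncard) (hl : lam M X ≤ 1) : False := by
  have := lam_lb2 hM hXE (by omega) hE2
  omega

end Part3

/-! ### Fans -/

section Part4

variable {M : Matroid α} {n : ℕ} {e : ℕ → α} {F T X : Set α} {x : α}

lemma fan_ne (hord : FanOrd M n e) {i j : ℕ} (hi : i < n) (hj : j < n) (hij : i ≠ j) :
    e i ≠ e j := fun h => hij (hord.2.1 hi hj h)

lemma fan_memE (hord : FanOrd M n e) {i : ℕ} (hi : i < n) : e i ∈ M.E :=
  hord.2.2.1 i hi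

lemma fan_memF (hF : F = e '' Set.Iio n) {i : ℕ} (hi : i < n) : e i ∈ F := by
  rw [hF]; exact ⟨i, hi, rfl⟩

lemma fan_F_sub (hord : FanOrd M n e) (hF : F = e '' Set.Iio n) : F ⊆ M.E := by
  rw [hF]; rintro z ⟨i, hi, rfl⟩; exact fan_memE hord hi

lemma fan_F_ncard (hord : FanOrd M n e) (hF : F = e '' Set.Iio n) : F.ncard = n := by
  rw [hF, Set.ncard_image_of_injOn hord.2.1, ← Finset.coe_range, Set.ncard_coe_finset,
    Finset.card_range]

lemma fan_parity (hord : FanOrd M n e) (h0 : Triad M (tri e 0)) :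
    ∀ i, i + 3 ≤ n → ((i % 2 = 0 → Triad M (tri e i)) ∧ (i % 2 = 1 → Triangle M (tri e i))) := by
  intro i
  induction i with
  | zero => exact fun _ => ⟨fun _ => h0, fun h => by omega⟩
  | succ k IH =>
    intro hk
    obtain ⟨IH1, IH2⟩ := IH (by omega)
    have halt := hord.2.2.2.2 k (by omega)
    refine ⟨fun hp => halt.1 (IH2 (by omega)), fun hp => halt.2 (IH1 (by omega))⟩

lemma tri_ncard (hord : FanOrd M n e) {i : ℕ} (hi : i + 2 < n) : (tri e i).ncard = 3 :=
  ncard_triple (fan_ne hord (by omega) (by omega) (by omega))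
    (fan_ne hord (by omega) (by omega) (by omega))
    (fan_ne hord (by omega) (by omega) (by omega))

lemma fan_extend [M.Finite] (hM : ThreeConnected M) (hW : ¬ IsWheelOrWhirl M)
    (hord : FanOrd M n e) (hF : F = e '' Set.Iio n) (hmax : MaximalFan M F)
    (h0 : Triad M (tri e 0)) (hxE : x ∈ M.E) (hxF : x ∉ F)
    (hT : Triangle M {x, e 0, e 1}) : False := by
  set e' : ℕ → α := fun i => if i = 0 then x else e (i - 1) with he'
  have he'0 : e' 0 = x := rfl
  have he's : ∀ i, e' (i + 1) = e i := fun i => by simp [he']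
  have htri0 : tri e' 0 = {x, e 0, e 1} := by
    unfold tri
    rw [he'0, he's 0, he's 1]
  have htris : ∀ i, tri e' (i + 1) = tri e i := by
    intro i
    unfold tri
    rw [he's, he's, he's]
  have hford : FanOrd M (n + 1) e' := by
    refine ⟨by have := hord.1; omega, ?_, ?_, ?_, ?_⟩
    · intro i hi j hj hij
      simp only [Set.mem_Iio] at hi hj
      match i, j with
      | 0, 0 => rfl
      | 0, j + 1 =>
        rw [he'0, he's] at hij
        exact absurd (hij ▸ fan_memF hF (show j < n by omega)) hxF
      | i + 1, 0 =>
        rw [he'0, he's] at hij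
        exact absurd (hij ▸ fan_memF hF (show i < n by omega)) hxF
      | i + 1, j + 1 =>
        rw [he's, he's] at hij
        have := hord.2.1 (show i ∈ Set.Iio n by simpa using by omega)
          (show j ∈ Set.Iio n by simpa using by omega) hij
        omega
    · intro i hi
      match i with
      | 0 => exact he'0 ▸ hxE
      | i + 1 => exact (he's i) ▸ fan_memE hord (by omega)
    · exact Or.inl (htri0 ▸ hT)
    · intro i hi
      match i with
      | 0 =>
        rw [htri0, htris 0]
        exact ⟨fun _ => h0, fun htd => absurd hT (fun hT' => both_contra hM hW hT' htd)⟩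
      | i + 1 =>
        rw [htris, htris]
        exact hord.2.2.2.2 i (by omega)
  have hsub : F ⊆ e' '' Set.Iio (n + 1) := by
    rw [hF]
    rintro z ⟨i, hi, rfl⟩
    exact ⟨i + 1, by simp only [Set.mem_Iio] at hi ⊢; omega, he's i⟩
  have heq := hmax.2 _ (Or.inr ⟨n + 1, e', hford, rfl⟩) hsub
  have : x ∈ F := by
    rw [← heq]
    exact ⟨0, by simp, he'0⟩
  exact hxF this

end Part4

section Part5

variable {M : Matroid α} {n : ℕ} {e : ℕ → α} {F T X : Set α} {x z : α}

lemma ncard_Iio (n : ℕ) : (Set.Iio n).ncard = n := by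
  rw [← Finset.coe_range, Set.ncard_coe_finset, Finset.card_range]

lemma wheel_case [M.Finite] (hM : ThreeConnected M) (hW : ¬ IsWheelOrWhirl M)
    (hord : FanOrd M n e) (h0 : Triad M (tri e 0)) (hev : n % 2 = 0) (h4 : 4 ≤ n)
    (hT : Triangle M {e 0, e 1, e (n - 1)}) : False := by
  set F := e '' Set.Iio n with hF
  have hinj := hord.2.1
  have hFE : F ⊆ M.E := fan_F_sub hord hF
  have hFn : F.ncard = n := fan_F_ncard hord hF
  have hE4 : 4 ≤ M.E.ncard := by
    have := Set.ncard_le_ncard hFE M.ground_finite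
    omega
  have hpar := fan_parity hord h0
  -- the odd-indexed elements span F
  set Bodd : Set α := (fun j => e (2 * j + 1)) '' Set.Iio (n / 2) with hBodd
  have hBoddF : Bodd ⊆ F := by
    rintro w ⟨j, hj, rfl⟩
    simp only [Set.mem_Iio] at hj
    exact fan_memF hF (by omega)
  have hBoddE : Bodd ⊆ M.E := hBoddF.trans hFE
  have hBoddcard : Bodd.ncard = n / 2 := by
    rw [hBodd, Set.ncard_image_of_injOn, ncard_Iio]
    intro i hi j hj hij
    simp only [Set.mem_Iio] at hi hj
    have := hinj (show 2*i+1 ∈ Set.Iio n by simp only [Set.mem_Iio]; omega)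
      (show 2*j+1 ∈ Set.Iio n by simp only [Set.mem_Iio]; omega) hij
    omega
  have hmemBodd : ∀ i, i % 2 = 1 → i < n → e i ∈ Bodd := by
    intro i hpi hi
    refine ⟨i / 2, by simp only [Set.mem_Iio]; omega, ?_⟩
    show e (2 * (i / 2) + 1) = e i
    congr 1
    omega
  have hcov : ∀ i, i < n → e i ∈ M.closure Bodd := by
    intro i hi
    rcases Nat.even_or_odd i with hevi | hodd
    · rcases Nat.eq_zero_or_pos i with rfl | hpos
      · have hc0 := circuit_mem_closure hT.1 (show e 0 ∈ {e 0, e 1, e (n-1)} by simp)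
        refine M.closure_subset_closure ?_ hc0
        rintro w ⟨hw, hwne⟩
        simp only [Set.mem_singleton_iff] at hwne
        rcases hw with hw | hw | hw
        · exact absurd hw hwne
        · exact hw ▸ hmemBodd 1 rfl (by omega)
        · exact hw ▸ hmemBodd (n-1) (by omega) (by omega)
      · obtain ⟨j, rfl⟩ : ∃ j, i = j + 2 := ⟨i - 2, by rcases hevi with ⟨t, ht⟩; omega⟩
        have hje : j % 2 = 0 := by rcases hevi with ⟨t, ht⟩; omega
        have hile : j + 2 ≤ n - 2 := by omega
        have htr : Triangle M (tri e (j + 1)) :=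
          (hpar (j + 1) (by omega)).2 (by omega)
        have hcm := circuit_mem_closure htr.1
          (show e (j + 2) ∈ tri e (j + 1) by unfold tri; simp)
        refine M.closure_subset_closure ?_ hcm
        rintro w ⟨hw, hwne⟩
        simp only [Set.mem_singleton_iff] at hwne
        unfold tri at hw
        rcases hw with hw | hw | hw
        · exact hw ▸ hmemBodd (j+1) (by omega) (by omega)
        · exact absurd hw hwne
        · exact hw ▸ hmemBodd (j+3) (by omega) (by omega)
    · exact M.subset_closure Bodd hBoddE
        (hmemBodd i (by rcases hodd with ⟨t, ht⟩; omega) hi)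
  have hrF : r M F ≤ ((n / 2 : ℕ) : ℤ) := by
    have h1 : r M F ≤ r M Bodd := by
      refine r_le_of_subset_closure hBoddE ?_
      rintro w ⟨i, hi, rfl⟩
      exact hcov i (by simpa using hi)
    have h2 : r M Bodd ≤ ((n / 2 : ℕ) : ℤ) := hBoddcard ▸ r_le_ncard hBoddE
    omega
  -- the even-indexed elements plus e (n-1) cospan F
  set Bev : Set α := ((fun j => e (2 * j)) '' Set.Iio (n / 2)) ∪ {e (n - 1)} with hBev
  have hBevF : Bev ⊆ F := by
    rintro w (⟨j, hj, rfl⟩ | hw)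
    · simp only [Set.mem_Iio] at hj
      exact fan_memF hF (by omega)
    · simp only [Set.mem_singleton_iff] at hw
      exact hw ▸ fan_memF hF (by omega)
  have hBevE : Bev ⊆ M.E := hBevF.trans hFE
  have hBevcard : Bev.ncard ≤ n / 2 + 1 := by
    have h1 : Bev.ncard ≤ ((fun j => e (2 * j)) '' Set.Iio (n / 2)).ncard + 1 := by
      rw [hBev]
      simpa using Set.ncard_union_le ((fun j => e (2 * j)) '' Set.Iio (n / 2)) {e (n-1)}
    have h2 := Set.ncard_image_le (f := fun j => e (2 * j)) (Set.finite_Iio (n / 2))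
    rw [ncard_Iio] at h2
    omega
  have hmemBev : ∀ i, i % 2 = 0 → i < n → e i ∈ Bev := by
    intro i hpi hi
    refine Or.inl ⟨i / 2, by simp only [Set.mem_Iio]; omega, ?_⟩
    show e (2 * (i / 2)) = e i
    congr 1
    omega
  have hcovd : ∀ i, i < n → e i ∈ M✶.closure Bev := by
    intro i hi
    rcases Nat.even_or_odd i with hevi | hodd
    · exact M✶.subset_closure Bev hBevE (hmemBev i (by rcases hevi with ⟨t,ht⟩; omega) hi)
    · obtain ⟨k, rfl⟩ := hodd
      rcases Nat.lt_or_ge (2 * k + 1) (n - 1) with hlt | hge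
      · have htd : Triad M (tri e (2 * k)) := (hpar (2 * k) (by omega)).1 (by omega)
        have hcm := circuit_mem_closure (M := M✶) htd.1
          (show e (2 * k + 1) ∈ tri e (2 * k) by unfold tri; simp)
        refine M✶.closure_subset_closure ?_ hcm
        rintro w ⟨hw, hwne⟩
        simp only [Set.mem_singleton_iff] at hwne
        unfold tri at hw
        rcases hw with hw | hw | hw
        · exact hw ▸ hmemBev (2 * k) (by omega) (by omega)
        · exact absurd hw hwne
        · exact hw ▸ hmemBev (2 * k + 2) (by omega) (by omega)
      · have : 2 * k + 1 = n - 1 := by omega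
        exact M✶.subset_closure Bev hBevE (Or.inr (by rw [this]; rfl))
  have hrdF : r M✶ F ≤ ((n / 2 : ℕ) : ℤ) + 1 := by
    have h1 : r M✶ F ≤ r M✶ Bev := by
      refine r_le_of_subset_closure (M := M✶) hBevE ?_
      rintro w ⟨i, hi, rfl⟩
      exact hcovd i (by simpa using hi)
    have h2 : r M✶ Bev ≤ ((Bev.ncard : ℕ) : ℤ) := r_le_ncard (M := M✶) hBevE
    have : ((Bev.ncard : ℕ) : ℤ) ≤ ((n / 2 : ℕ) : ℤ) + 1 := by exact_mod_cast hBevcard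
    omega
  have hdualF := r_dual (M := M) hFE
  rw [hFn] at hdualF
  have hlamF : lam M F ≤ 1 := by
    unfold lam
    omega
  have hEcompl : (M.E \ F).ncard = M.E.ncard - n := by rw [ncard_compl_eq hFE, hFn]
  -- key orthogonality argument for circuits inside Bodd ∪ {z}
  have horthC : ∀ (C : Set α) (w : α), Circuit M C → C ⊆ Bodd ∪ {w} → w ∉ F →
      C ⊆ {w, e (n - 1)} := by
    intro C w hC hCsub hwF
    have hnotin : ∀ k, 2 * k + 4 ≤ n → e (2 * k + 1) ∉ C := by
      intro k hk hmem
      have htd : Triad M (tri e (2 * k)) := (hpar (2 * k) (by omega)).1 (by omega)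
      obtain ⟨y, hyne, hyC, hytri⟩ := circuit_cocircuit_orth hC htd.1 hmem
        (show e (2 * k + 1) ∈ tri e (2 * k) by unfold tri; simp)
      rcases hCsub hyC with ⟨j, hj, rfl⟩ | hy
      · simp only [Set.mem_Iio] at hj
        unfold tri at hytri
        rcases hytri with hw | hw | hw
        · have := hinj (show 2*j+1 ∈ Set.Iio n by simp only [Set.mem_Iio]; omega)
            (show 2*k ∈ Set.Iio n by simp only [Set.mem_Iio]; omega) hw
          omega
        · exact hyne hw
        · have := hinj (show 2*j+1 ∈ Set.Iio n by simp only [Set.mem_Iio]; omega)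
            (show 2*k+2 ∈ Set.Iio n by simp only [Set.mem_Iio]; omega) hw
          omega
      · simp only [Set.mem_singleton_iff] at hy
        subst hy
        unfold tri at hytri
        rcases hytri with hw | hw | hw <;>
          exact hwF (hw ▸ fan_memF hF (by omega))
    intro y hy
    rcases hCsub hy with ⟨j, hj, rfl⟩ | hyw
    · simp only [Set.mem_Iio] at hj
      rcases Nat.lt_or_ge (2 * j + 4) (n + 1) with hlt | hge
      · exact absurd hy (hnotin j (by omega))
      · show e (2 * j + 1) ∈ ({w, e (n - 1)} : Set α)
        have heq : 2 * j + 1 = n - 1 := by omega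
        rw [heq]
        simp
    · simp only [Set.mem_singleton_iff] at hyw
      rw [hyw]
      simp
  rcases Nat.lt_or_ge (M.E \ F).ncard 1 with hc0 | hc1
  · -- E = F : build the wheel
    have hEF : M.E = F := by
      have h1 : M.E \ F = ∅ := by
        have : (M.E \ F).Finite := M.ground_finite.diff (t := F)
        rw [← Set.ncard_eq_zero this]
        omega
      have h2 : M.E ⊆ F := by
        intro w hw
        by_contra hwF
        exact (h1 ▸ (⟨hw, hwF⟩ : w ∈ M.E \ F) : w ∈ (∅ : Set α))
      exact subset_antisymm h2 hFE
    have hBoddInd : M.Indep Bodd := by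
      by_contra hdep
      obtain ⟨C, hCsub, hC⟩ := dep_contains_circuit hBoddE hdep
      -- pick w not in F impossible; use a dummy: C ⊆ Bodd ∪ {w} fails... use direct argument
      have h3 := min_circuit hM hE4 hC
      -- C ⊆ {e (n-1)} by the orthogonality argument with no extra element
      have hCsub2 : C ⊆ {e (n - 1)} := by
        intro y hy
        obtain ⟨j, hj, rfl⟩ := hCsub hy
        simp only [Set.mem_Iio] at hj
        rcases Nat.lt_or_ge (2 * j + 4) (n + 1) with hlt | hge
        · exfalso
          have htd : Triad M (tri e (2 * j)) := (hpar (2 * j) (by omega)).1 (by omega)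
          obtain ⟨y, hyne, hyC, hytri⟩ := circuit_cocircuit_orth hC htd.1 hy
            (show e (2 * j + 1) ∈ tri e (2 * j) by unfold tri; simp)
          obtain ⟨j', hj', rfl⟩ := hCsub hyC
          simp only [Set.mem_Iio] at hj'
          unfold tri at hytri
          rcases hytri with hw | hw | hw
          · have := hinj (show 2*j'+1 ∈ Set.Iio n by simp only [Set.mem_Iio]; omega)
              (show 2*j ∈ Set.Iio n by simp only [Set.mem_Iio]; omega) hw
            omega
          · exact hyne hw
          · have := hinj (show 2*j'+1 ∈ Set.Iio n by simp only [Set.mem_Iio]; omega)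
              (show 2*j+2 ∈ Set.Iio n by simp only [Set.mem_Iio]; omega) hw
            omega
        · show e (2 * j + 1) ∈ ({e (n - 1)} : Set α)
          have heq : 2 * j + 1 = n - 1 := by omega
          rw [heq]
          rfl
      have := Set.ncard_le_ncard hCsub2 (Set.finite_singleton _)
      simp only [Set.ncard_singleton] at this
      omega
    have hrE_ge : ((n / 2 : ℕ) : ℤ) ≤ r M M.E := by
      have := le_r hBoddInd hBoddE
      rw [hBoddcard] at this
      exact this
    -- derive the triad {e (n-2), e (n-1), e 0}
    set D : Set α := {e (n - 2), e (n - 1), e 0} with hD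
    have hD3 : D.ncard = 3 :=
      ncard_triple (fan_ne hord (by omega) (by omega) (by omega))
        (fan_ne hord (by omega) (by omega) (by omega))
        (fan_ne hord (by omega) (by omega) (by omega))
    have hDE : D ⊆ M.E := by
      rintro w (hw | hw | hw) <;> exact hw ▸ fan_memE hord (by omega)
    set Bodd' : Set α := (fun j => e (2 * j + 1)) '' Set.Iio (n / 2 - 1) with hBodd'
    have hBodd'E : Bodd' ⊆ M.E := by
      rintro w ⟨j, hj, rfl⟩
      simp only [Set.mem_Iio] at hj
      exact fan_memE hord (by omega)
    have hmemBodd' : ∀ i, i % 2 = 1 → i + 2 < n → e i ∈ Bodd' := by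
      intro i hpi hi
      refine ⟨i / 2, by simp only [Set.mem_Iio]; omega, ?_⟩
      show e (2 * (i / 2) + 1) = e i
      congr 1
      omega
    have hcov' : M.E \ D ⊆ M.closure Bodd' := by
      rintro w ⟨hwE, hwD⟩
      rw [hEF] at hwE
      obtain ⟨i, hi, rfl⟩ := hwE
      simp only [Set.mem_Iio] at hi
      have hine : i ≠ 0 ∧ e i ≠ e (n - 1) ∧ e i ≠ e (n - 2) := by
        refine ⟨fun h => hwD (by rw [h]; right; right; rfl), fun h => hwD (by rw [h]; right; left; rfl),
          fun h => hwD (by rw [h]; left; rfl)⟩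
      have hi1 : 1 ≤ i := by omega
      have hin1 : i ≠ n - 1 := fun h => hine.2.1 (by rw [h])
      have hin2 : i ≠ n - 2 := fun h => hine.2.2 (by rw [h])
      have hile : i ≤ n - 3 := by omega
      rcases Nat.even_or_odd i with hevi | hodd
      · obtain ⟨j, rfl⟩ : ∃ j, i = j + 2 := ⟨i - 2, by rcases hevi with ⟨t, ht⟩; omega⟩
        have hje : j % 2 = 0 := by rcases hevi with ⟨t, ht⟩; omega
        have htr : Triangle M (tri e (j + 1)) := (hpar (j + 1) (by omega)).2 (by omega)
        have hcm := circuit_mem_closure htr.1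
          (show e (j + 2) ∈ tri e (j + 1) by unfold tri; simp)
        refine M.closure_subset_closure ?_ hcm
        rintro v ⟨hv, hvne⟩
        simp only [Set.mem_singleton_iff] at hvne
        unfold tri at hv
        rcases hv with hv | hv | hv
        · exact hv ▸ hmemBodd' (j+1) (by omega) (by omega)
        · exact absurd hv hvne
        · exact hv ▸ hmemBodd' (j+3) (by omega) (by omega)
      · exact M.subset_closure Bodd' hBodd'E
          (hmemBodd' i (by rcases hodd with ⟨t,ht⟩; omega) (by omega))
    have hrED : r M (M.E \ D) ≤ ((n / 2 : ℕ) : ℤ) - 1 := by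
      have h1 : r M (M.E \ D) ≤ r M Bodd' := r_le_of_subset_closure hBodd'E hcov'
      have h2 : r M Bodd' ≤ (Bodd'.ncard : ℤ) := r_le_ncard hBodd'E
      have h3 : Bodd'.ncard ≤ n / 2 - 1 := by
        have := Set.ncard_image_le (f := fun j => e (2 * j + 1)) (Set.finite_Iio (n / 2 - 1))
        rw [ncard_Iio] at this
        exact this
      have h4 : (Bodd'.ncard : ℤ) ≤ ((n / 2 : ℕ) : ℤ) - 1 := by
        have : (1 : ℕ) ≤ n / 2 := by omega
        push_cast
        omega
      omega
    have hDdep : ¬ M✶.Indep D := by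
      intro hind
      have h1 : r M✶ D = 3 := by rw [r_indep hind, hD3]; norm_num
      have h2 := r_dual (M := M) hDE
      rw [hD3, h1] at h2
      push_cast at h2
      omega
    have hTriadD : Triad M D := by
      refine ⟨⟨hDE, hDdep, fun D' hD' => ?_⟩, hD3⟩
      have : D'.ncard < 3 := hD3 ▸ Set.ncard_lt_ncard hD' (M.set_finite D hDE)
      exact small_indep (threeConnected_dual hM) (by rw [dual_ground]; exact hE4)
        (hD'.subset.trans hDE) (by omega)
    -- build the wheel structure
    have hn2 : 2 * (n / 2) = n := by omega
    refine hW (shift_wheel (m := n / 2) (by omega) e ?_ ?_ ?_)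
    · rw [hn2]; exact hinj
    · rw [hn2, hEF, hF]
    · rw [hn2]
      intro i hi
      rcases Nat.lt_or_ge i (n - 2) with hlt | hge
      · have m1 : (i + 1) % n = i + 1 := Nat.mod_eq_of_lt (by omega)
        have m2 : (i + 2) % n = i + 2 := Nat.mod_eq_of_lt (by omega)
        rw [m1, m2]
        exact ⟨fun h => (hpar i (by omega)).1 h, fun h => (hpar i (by omega)).2 h⟩
      · rcases Nat.lt_or_ge i (n - 1) with hlt2 | hge2
        · have hieq : i = n - 2 := by omega
          have m1 : (i + 1) % n = n - 1 := by
            rw [hieq, Nat.mod_eq_of_lt (by omega)]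
            omega
          have m2 : (i + 2) % n = 0 := by
            have : i + 2 = n := by omega
            rw [this, Nat.mod_self]
          rw [m1, m2]
          refine ⟨fun _ => ?_, fun h => by omega⟩
          have : ({e i, e (n-1), e 0} : Set α) = D := by rw [hieq]
          rw [this]
          exact hTriadD
        · have hieq : i = n - 1 := by omega
          have m1 : (i + 1) % n = 0 := by
            have : i + 1 = n := by omega
            rw [this, Nat.mod_self]
          have m2 : (i + 2) % n = 1 := by
            have : i + 2 = n + 1 := by omega
            rw [this, Nat.add_mod_left, Nat.mod_eq_of_lt (by omega)]
          rw [m1, m2]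
          refine ⟨fun h => by omega, fun _ => ?_⟩
          have hseteq : ({e i, e 0, e 1} : Set α) = {e 0, e 1, e (n - 1)} := by
            rw [hieq]
            ext w
            simp only [Set.mem_insert_iff, Set.mem_singleton_iff]
            tauto
          rw [hseteq]
          exact hT
  · -- |E \ F| ≥ 1
    rcases Nat.lt_or_ge (M.E \ F).ncard 2 with hc1' | hc2
    swap
    · have := lam_lb2 hM hFE (by omega) hc2
      omega
    have hcne : (M.E \ F).ncard = 1 := by omega
    obtain ⟨w, hw⟩ := Set.ncard_eq_one.1 hcne
    have hwE : w ∈ M.E := by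
      have : w ∈ M.E \ F := by rw [hw]; rfl
      exact this.1
    have hwF : w ∉ F := by
      have : w ∈ M.E \ F := by rw [hw]; rfl
      exact this.2
    have hlam1 : lam M F = 1 := by
      have := lam_lb1 hM hFE (by omega) (by omega)
      omega
    have hrwle : r M (M.E \ F) ≤ 1 := by
      rw [hw]
      have := r_le_ncard (M := M) (show {w} ⊆ M.E by simpa using hwE)
      simpa using this
    have hrFE : r M F = r M M.E := by
      have h1 : r M F ≤ r M M.E := r_mono hFE
      unfold lam at hlam1
      omega
    have hdep : ¬ M.Indep (Bodd ∪ {w}) := by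
      intro hind
      have h1 := le_r hind (Set.union_subset hBoddE (by simpa using hwE))
      have h2 : (Bodd ∪ {w}).ncard = n / 2 + 1 := by
        rw [Set.union_singleton, Set.ncard_insert_of_notMem (fun hmem => hwF (hBoddF hmem))
          (M.set_finite Bodd hBoddE), hBoddcard]
      have h3 : r M (Bodd ∪ {w}) ≤ r M M.E :=
        r_mono (Set.union_subset hBoddE (by simpa using hwE))
      rw [h2] at h1
      push_cast at h1
      omega
    obtain ⟨C, hCsub, hC⟩ := dep_contains_circuit
      (Set.union_subset hBoddE (by simpa using hwE)) hdep
    have hCsub2 := horthC C w hC hCsub hwF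
    have hCcard : C.ncard ≤ 2 := by
      have h1 := Set.ncard_le_ncard hCsub2 ((Set.finite_singleton _).insert w)
      have h2 := Set.ncard_insert_le w ({e (n-1)} : Set α)
      simp only [Set.ncard_singleton] at h2
      omega
    have := min_circuit hM hE4 hC
    omega

end Part5

section Part6

variable {M : Matroid α} {n : ℕ} {e : ℕ → α} {F T X : Set α} {x u v : α}

lemma third_elt (h3 : T.ncard = 3) (hu : u ∈ T) (hv : v ∈ T) (huv : u ≠ v) :
    ∃ x, x ∉ ({u, v} : Set α) ∧ T = {u, v, x} := by
  have hfin : T.Finite := Set.finite_of_ncard_ne_zero (by omega)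
  have hsub : ({u, v} : Set α) ⊆ T := by
    rintro w (rfl | rfl)
    · exact hu
    · exact hv
  have hpair : ({u, v} : Set α).ncard = 2 := Set.ncard_pair huv
  have hdiff : (T \ {u, v}).ncard = 1 := by
    rw [Set.ncard_diff hsub, hpair, h3]
  obtain ⟨x, hx⟩ := Set.ncard_eq_one.1 hdiff
  have hxmem : x ∈ T \ {u, v} := by rw [hx]; rfl
  refine ⟨x, hxmem.2, ?_⟩
  have := Set.union_diff_cancel hsub
  rw [hx] at this
  rw [← this]
  ext w
  simp only [Set.mem_union, Set.mem_insert_iff, Set.mem_singleton_iff]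
  tauto

lemma caseA [M.Finite] (hM : ThreeConnected M) (hW : ¬ IsWheelOrWhirl M)
    (hord : FanOrd M n e) (hF : F = e '' Set.Iio n) (hmax : MaximalFan M F)
    (h0 : Triad M (tri e 0)) (hT : Triangle M T)
    (he0 : e 0 ∈ T) (he1 : e 1 ∈ T) : False := by
  have h3n := hord.1
  have hne01 : e 0 ≠ e 1 := fan_ne hord (by omega) (by omega) (by omega)
  obtain ⟨x, hxuv, hTeq⟩ := third_elt hT.2 he0 he1 hne01
  have hxE : x ∈ M.E := hT.1.1 (by rw [hTeq]; right; right; rfl)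
  by_cases hx2 : x = e 2
  · have hteq : T = tri e 0 := by rw [hTeq, hx2]; rfl
    exact both_contra hM hW (hteq ▸ hT) h0
  by_cases hxF : x ∈ F
  swap
  · have hseteq : ({x, e 0, e 1} : Set α) = T := by
      rw [hTeq]; ext w
      simp only [Set.mem_insert_iff, Set.mem_singleton_iff]
      tauto
    exact fan_extend hM hW hord hF hmax h0 hxE hxF (hseteq ▸ hT)
  obtain ⟨j, hj, hxj⟩ : ∃ j, j < n ∧ e j = x := by
    rw [hF] at hxF
    obtain ⟨j, hj, hxj⟩ := hxF
    exact ⟨j, by simpa using hj, hxj⟩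
  have hj3 : 3 ≤ j := by
    rcases Nat.lt_or_ge j 3 with hlt | hge
    · exfalso
      interval_cases j
      · exact hxuv (by rw [← hxj]; left; rfl)
      · exact hxuv (by rw [← hxj]; right; rfl)
      · exact hx2 hxj.symm
    · exact hge
  by_cases hwrap : j = n - 1 ∧ n % 2 = 0
  · have hTeq' : T = {e 0, e 1, e (n - 1)} := by rw [hTeq, ← hxj, hwrap.1]
    exact wheel_case hM hW hord h0 hwrap.2 (by omega) (hTeq' ▸ hT)
  · have hex : ∃ i₀, i₀ % 2 = 0 ∧ 2 ≤ i₀ ∧ i₀ + 3 ≤ n ∧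
        (j = i₀ ∨ j = i₀ + 1 ∨ j = i₀ + 2) := by
      rcases Nat.even_or_odd j with hev | hod
      · have hje : j % 2 = 0 := Nat.even_iff.1 hev
        rcases Nat.lt_or_ge (j + 3) (n + 1) with hlt | hge
        · exact ⟨j, hje, by omega, by omega, Or.inl rfl⟩
        · exact ⟨j - 2, by omega, by omega, by omega, by omega⟩
      · have hjo : j % 2 = 1 := Nat.odd_iff.1 hod
        exact ⟨j - 1, by omega, by omega, by omega, by omega⟩
    obtain ⟨i₀, hpar0, hi2, hi3, hjcase⟩ := hex
    have htd : Triad M (tri e i₀) := (fan_parity hord h0 i₀ hi3).1 hpar0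
    have hjtri : e j ∈ tri e i₀ := by
      unfold tri
      rcases hjcase with rfl | rfl | rfl
      · left; rfl
      · right; left; rfl
      · right; right; rfl
    obtain ⟨y, hyne, hyT, hytd⟩ := circuit_cocircuit_orth hT.1 htd.1
      (show e j ∈ T by rw [hxj, hTeq]; right; right; rfl) hjtri
    rw [hTeq] at hyT
    unfold tri at hytd
    have hinj := hord.2.1
    have hmem : ∀ a b : ℕ, a < n → b < n → e a = e b → a = b := by
      intro a b ha hb hab
      exact hinj (by simpa using ha) (by simpa using hb) hab
    rcases hyT with rfl | rfl | rfl
    · rcases hytd with hw | hw | hw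
      · have := hmem 0 i₀ (by omega) (by omega) hw; omega
      · have := hmem 0 (i₀+1) (by omega) (by omega) hw; omega
      · have := hmem 0 (i₀+2) (by omega) (by omega) hw; omega
    · rcases hytd with hw | hw | hw
      · have := hmem 1 i₀ (by omega) (by omega) hw; omega
      · have := hmem 1 (i₀+1) (by omega) (by omega) hw; omega
      · have := hmem 1 (i₀+2) (by omega) (by omega) hw; omega
    · exact hyne hxj.symm

end Part6

section Part7

variable {M : Matroid α} {n : ℕ} {e : ℕ → α} {F T X : Set α} {x z : α}

lemma fan_E4 [M.Finite] (hord : FanOrd M n e) (h4 : 4 ≤ n) : 4 ≤ M.E.ncard := by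
  have h1 : (e '' Set.Iio n).ncard = n := fan_F_ncard hord rfl
  have h2 := Set.ncard_le_ncard (fan_F_sub hord rfl) M.ground_finite
  omega

lemma fan_hmem (hord : FanOrd M n e) : ∀ a b : ℕ, a < n → b < n → e a = e b → a = b :=
  fun a b ha hb hab => hord.2.1 (by simpa using ha) (by simpa using hb) hab

lemma case_x3 [M.Finite] (hM : ThreeConnected M) (hW : ¬ IsWheelOrWhirl M)
    (hord : FanOrd M n e) (h0 : Triad M (tri e 0)) (h4 : 4 ≤ n)
    (hT : Triangle M T) (hTeq : T = {e 0, e 2, e 3}) : False := by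
  have hmem := fan_hmem hord
  have hE4 := fan_E4 hord h4
  have htr1 : Triangle M (tri e 1) := (fan_parity hord h0 1 (by omega)).2 rfl
  have hTne : T ≠ tri e 1 := by
    intro h
    have : e 0 ∈ tri e 1 := h ▸ (by rw [hTeq]; left; rfl)
    unfold tri at this
    rcases this with hw | hw | hw
    · have := hmem 0 1 (by omega) (by omega) hw; omega
    · have := hmem 0 2 (by omega) (by omega) hw; omega
    · have := hmem 0 3 (by omega) (by omega) hw; omega
  have hcom : e 3 ∈ T ∩ tri e 1 :=
    ⟨by rw [hTeq]; right; right; rfl, by unfold tri; right; right; rfl⟩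
  obtain ⟨C, hCsub, hC⟩ := circuit_elim hT.1 htr1.1 hTne hcom
  have hCsub' : C ⊆ {e 0, e 1, e 2} := by
    intro w hw
    obtain ⟨hw1, hw2⟩ := hCsub hw
    simp only [Set.mem_singleton_iff] at hw2
    rcases hw1 with hw1 | hw1
    · rw [hTeq] at hw1
      rcases hw1 with rfl | rfl | rfl
      · left; rfl
      · right; right; rfl
      · exact absurd rfl hw2
    · unfold tri at hw1
      rcases hw1 with rfl | rfl | rfl
      · right; left; rfl
      · right; right; rfl
      · exact absurd rfl hw2
  have hccard := min_circuit hM hE4 hC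
  have htri3 : ({e 0, e 1, e 2} : Set α).ncard = 3 :=
    ncard_triple (fan_ne hord (by omega) (by omega) (by omega))
      (fan_ne hord (by omega) (by omega) (by omega))
      (fan_ne hord (by omega) (by omega) (by omega))
  have hCeq : C = {e 0, e 1, e 2} :=
    Set.eq_of_subset_of_ncard_le hCsub' (by omega)
  have htr0 : Triangle M (tri e 0) := by
    have htriset : tri e 0 = {e 0, e 1, e 2} := rfl
    rw [htriset]
    exact ⟨hCeq ▸ hC, htri3⟩
  exact both_contra hM hW htr0 h0

lemma case_n6 [M.Finite] (hM : ThreeConnected M) (hW : ¬ IsWheelOrWhirl M)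
    (hord : FanOrd M n e) (h0 : Triad M (tri e 0)) (hn : n = 6)
    (hT : Triangle M T) (hTeq : T = {e 0, e 2, e 4}) : False := by
  subst hn
  have hmem := fan_hmem hord
  have hE4 := fan_E4 hord (by omega)
  have hpar := fan_parity hord h0
  have htr1 : Triangle M (tri e 1) := (hpar 1 (by omega)).2 rfl
  have htd2 : Triad M (tri e 2) := (hpar 2 (by omega)).1 rfl
  have htr3 : Triangle M (tri e 3) := (hpar 3 (by omega)).2 rfl
  -- first elimination : T and tri e 1 on e 2
  have hTne : T ≠ tri e 1 := by
    intro h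
    have : e 0 ∈ tri e 1 := h ▸ (by rw [hTeq]; left; rfl)
    unfold tri at this
    rcases this with hw | hw | hw
    · have := hmem 0 1 (by omega) (by omega) hw; omega
    · have := hmem 0 2 (by omega) (by omega) hw; omega
    · have := hmem 0 3 (by omega) (by omega) hw; omega
  have hcom : e 2 ∈ T ∩ tri e 1 :=
    ⟨by rw [hTeq]; right; left; rfl, by unfold tri; right; left; rfl⟩
  obtain ⟨C1, hC1sub, hC1⟩ := circuit_elim hT.1 htr1.1 hTne hcom
  have hS1 : C1 ⊆ {e 0, e 1, e 3, e 4} := by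
    intro w hw
    obtain ⟨hw1, hw2⟩ := hC1sub hw
    simp only [Set.mem_singleton_iff] at hw2
    rcases hw1 with hw1 | hw1
    · rw [hTeq] at hw1
      rcases hw1 with rfl | rfl | rfl
      · left; rfl
      · exact absurd rfl hw2
      · right; right; right; rfl
    · unfold tri at hw1
      rcases hw1 with rfl | rfl | rfl
      · right; left; rfl
      · exact absurd rfl hw2
      · right; right; left; rfl
  have hc1card := min_circuit hM hE4 hC1
  -- membership implications from orthogonality
  have himp01 : e 0 ∈ C1 → e 1 ∈ C1 := by
    intro h
    obtain ⟨y, hyne, hyC, hytd⟩ := circuit_cocircuit_orth hC1 h0.1 h (by left; rfl)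
    unfold tri at hytd
    rcases hS1 hyC with rfl | rfl | rfl | rfl
    · exact absurd rfl hyne
    · exact hyC
    · exfalso
      rcases hytd with hw | hw | hw
      · have := hmem 3 0 (by omega) (by omega) hw; omega
      · have := hmem 3 1 (by omega) (by omega) hw; omega
      · have := hmem 3 2 (by omega) (by omega) hw; omega
    · exfalso
      rcases hytd with hw | hw | hw
      · have := hmem 4 0 (by omega) (by omega) hw; omega
      · have := hmem 4 1 (by omega) (by omega) hw; omega
      · have := hmem 4 2 (by omega) (by omega) hw; omega
  have himp10 : e 1 ∈ C1 → e 0 ∈ C1 := by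
    intro h
    obtain ⟨y, hyne, hyC, hytd⟩ := circuit_cocircuit_orth hC1 h0.1 h (by right; left; rfl)
    unfold tri at hytd
    rcases hS1 hyC with rfl | rfl | rfl | rfl
    · exact hyC
    · exact absurd rfl hyne
    · exfalso
      rcases hytd with hw | hw | hw
      · have := hmem 3 0 (by omega) (by omega) hw; omega
      · have := hmem 3 1 (by omega) (by omega) hw; omega
      · have := hmem 3 2 (by omega) (by omega) hw; omega
    · exfalso
      rcases hytd with hw | hw | hw
      · have := hmem 4 0 (by omega) (by omega) hw; omega
      · have := hmem 4 1 (by omega) (by omega) hw; omega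
      · have := hmem 4 2 (by omega) (by omega) hw; omega
  have himp34 : e 3 ∈ C1 → e 4 ∈ C1 := by
    intro h
    obtain ⟨y, hyne, hyC, hytd⟩ := circuit_cocircuit_orth hC1 htd2.1 h
      (by unfold tri; right; left; rfl)
    unfold tri at hytd
    rcases hS1 hyC with rfl | rfl | rfl | rfl
    · exfalso
      rcases hytd with hw | hw | hw
      · have := hmem 0 2 (by omega) (by omega) hw; omega
      · have := hmem 0 3 (by omega) (by omega) hw; omega
      · have := hmem 0 4 (by omega) (by omega) hw; omega
    · exfalso
      rcases hytd with hw | hw | hw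
      · have := hmem 1 2 (by omega) (by omega) hw; omega
      · have := hmem 1 3 (by omega) (by omega) hw; omega
      · have := hmem 1 4 (by omega) (by omega) hw; omega
    · exact absurd rfl hyne
    · exact hyC
  -- C1 contains e 0, e 1, e 3 (via cardinality)
  have hkey : e 0 ∈ C1 ∧ e 3 ∈ C1 := by
    constructor
    · by_contra h
      have h1 : e 1 ∉ C1 := fun h1 => h (himp10 h1)
      have : C1 ⊆ {e 3, e 4} := by
        intro w hw
        rcases hS1 hw with rfl | rfl | rfl | rfl
        · exact absurd hw h
        · exact absurd hw h1
        · left; rfl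
        · right; rfl
      have hle := Set.ncard_le_ncard this (Set.toFinite _)
      have h2 := Set.ncard_insert_le (e 3) ({e 4} : Set α)
      simp only [Set.ncard_singleton] at h2
      omega
    · by_contra h
      have h1 : e 4 ∉ C1 := by
        intro h4'
        obtain ⟨y, hyne, hyC, hytd⟩ := circuit_cocircuit_orth hC1 htd2.1 h4'
          (by unfold tri; right; right; rfl)
        unfold tri at hytd
        rcases hS1 hyC with rfl | rfl | rfl | rfl
        · rcases hytd with hw | hw | hw
          · have := hmem 0 2 (by omega) (by omega) hw; omega
          · have := hmem 0 3 (by omega) (by omega) hw; omega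
          · have := hmem 0 4 (by omega) (by omega) hw; omega
        · rcases hytd with hw | hw | hw
          · have := hmem 1 2 (by omega) (by omega) hw; omega
          · have := hmem 1 3 (by omega) (by omega) hw; omega
          · have := hmem 1 4 (by omega) (by omega) hw; omega
        · exact h hyC
        · exact absurd rfl hyne
      have : C1 ⊆ {e 0, e 1} := by
        intro w hw
        rcases hS1 hw with rfl | rfl | rfl | rfl
        · left; rfl
        · right; rfl
        · exact absurd hw h
        · exact absurd hw h1
      have hle := Set.ncard_le_ncard this (Set.toFinite _)
      have h2 := Set.ncard_insert_le (e 0) ({e 1} : Set α)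
      simp only [Set.ncard_singleton] at h2
      omega
  -- second elimination : C1 and tri e 3 on e 3
  have hC1ne : C1 ≠ tri e 3 := by
    intro h
    have : e 0 ∈ tri e 3 := h ▸ hkey.1
    unfold tri at this
    rcases this with hw | hw | hw
    · have := hmem 0 3 (by omega) (by omega) hw; omega
    · have := hmem 0 4 (by omega) (by omega) hw; omega
    · have := hmem 0 5 (by omega) (by omega) hw; omega
  obtain ⟨C2, hC2sub, hC2⟩ := circuit_elim hC1 htr3.1 hC1ne
    ⟨hkey.2, by unfold tri; left; rfl⟩
  have hS2 : C2 ⊆ {e 0, e 1, e 4, e 5} := by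
    intro w hw
    obtain ⟨hw1, hw2⟩ := hC2sub hw
    simp only [Set.mem_singleton_iff] at hw2
    rcases hw1 with hw1 | hw1
    · rcases hS1 hw1 with rfl | rfl | rfl | rfl
      · left; rfl
      · right; left; rfl
      · exact absurd rfl hw2
      · right; right; left; rfl
    · unfold tri at hw1
      rcases hw1 with rfl | rfl | rfl
      · exact absurd rfl hw2
      · right; right; left; rfl
      · right; right; right; rfl
  have h4notin : e 4 ∉ C2 := by
    intro h4'
    obtain ⟨y, hyne, hyC, hytd⟩ := circuit_cocircuit_orth hC2 htd2.1 h4'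
      (by unfold tri; right; right; rfl)
    unfold tri at hytd
    rcases hS2 hyC with rfl | rfl | rfl | rfl
    · rcases hytd with hw | hw | hw
      · have := hmem 0 2 (by omega) (by omega) hw; omega
      · have := hmem 0 3 (by omega) (by omega) hw; omega
      · have := hmem 0 4 (by omega) (by omega) hw; omega
    · rcases hytd with hw | hw | hw
      · have := hmem 1 2 (by omega) (by omega) hw; omega
      · have := hmem 1 3 (by omega) (by omega) hw; omega
      · have := hmem 1 4 (by omega) (by omega) hw; omega
    · exact absurd rfl hyne
    · rcases hytd with hw | hw | hw
      · have := hmem 5 2 (by omega) (by omega) hw; omega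
      · have := hmem 5 3 (by omega) (by omega) hw; omega
      · have := hmem 5 4 (by omega) (by omega) hw; omega
  have hS2' : C2 ⊆ {e 0, e 1, e 5} := by
    intro w hw
    rcases hS2 hw with rfl | rfl | rfl | rfl
    · left; rfl
    · right; left; rfl
    · exact absurd hw h4notin
    · right; right; rfl
  have hc2card := min_circuit hM hE4 hC2
  have htrip : ({e 0, e 1, e 5} : Set α).ncard = 3 :=
    ncard_triple (fan_ne hord (by omega) (by omega) (by omega))
      (fan_ne hord (by omega) (by omega) (by omega))
      (fan_ne hord (by omega) (by omega) (by omega))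
  have hC2eq : C2 = {e 0, e 1, e 5} :=
    Set.eq_of_subset_of_ncard_le hS2' (by omega)
  have hT' : Triangle M {e 0, e 1, e (6 - 1)} := by
    show Triangle M {e 0, e 1, e 5}
    exact ⟨hC2eq ▸ hC2, htrip⟩
  exact wheel_case hM hW hord h0 (by omega) (by omega) hT'

end Part7

section Part8

variable {M : Matroid α} {n : ℕ} {e : ℕ → α} {F T X : Set α} {x z : α}

lemma case_n5 [M.Finite] (hM : ThreeConnected M) (hW : ¬ IsWheelOrWhirl M)
    (hord : FanOrd M n e) (hF : F = e '' Set.Iio n) (hmax : MaximalFan M F)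
    (h0 : Triad M (tri e 0)) (hn : n = 5)
    (hT : Triangle M T) (hTeq : T = {e 0, e 2, e 4}) : False := by
  subst hn
  have hmem := fan_hmem hord
  have hE4 := fan_E4 hord (by omega)
  have hpar := fan_parity hord h0
  have htr1 : Triangle M (tri e 1) := (hpar 1 (by omega)).2 rfl
  have htd2 : Triad M (tri e 2) := (hpar 2 (by omega)).1 rfl
  have hFE : F ⊆ M.E := fan_F_sub hord hF
  have hFn : F.ncard = 5 := fan_F_ncard hord hF
  set B5 : Set α := {e 0, e 1, e 3} with hB5
  have hB5F : B5 ⊆ F := by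
    rintro w (rfl | rfl | rfl) <;> exact fan_memF hF (by omega)
  have hB5E : B5 ⊆ M.E := hB5F.trans hFE
  have hB5card : B5.ncard = 3 :=
    ncard_triple (fan_ne hord (by omega) (by omega) (by omega))
      (fan_ne hord (by omega) (by omega) (by omega))
      (fan_ne hord (by omega) (by omega) (by omega))
  -- e 2 and e 4 lie in the closure of B5
  have hcl2 : e 2 ∈ M.closure B5 := by
    have hc := circuit_mem_closure htr1.1 (show e 2 ∈ tri e 1 by unfold tri; right; left; rfl)
    refine M.closure_subset_closure ?_ hc
    rintro w ⟨hw, hwne⟩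
    simp only [Set.mem_singleton_iff] at hwne
    unfold tri at hw
    rcases hw with rfl | rfl | rfl
    · right; left; rfl
    · exact absurd rfl hwne
    · right; right; rfl
  have hcl4 : e 4 ∈ M.closure B5 := by
    have hc := circuit_mem_closure hT.1
      (show e 4 ∈ T by rw [hTeq]; right; right; rfl)
    have hsub : T \ {e 4} ⊆ insert (e 2) B5 := by
      rintro w ⟨hw, hwne⟩
      simp only [Set.mem_singleton_iff] at hwne
      rw [hTeq] at hw
      rcases hw with rfl | rfl | rfl
      · right; left; rfl
      · left; rfl
      · exact absurd rfl hwne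
    have h1 : e 4 ∈ M.closure (insert (e 2) B5) := M.closure_subset_closure hsub hc
    rwa [Matroid.closure_insert_eq_of_mem_closure hcl2] at h1
  have hcovF : ∀ i, i < 5 → e i ∈ M.closure B5 := by
    intro i hi
    interval_cases i
    · exact M.subset_closure B5 hB5E (by left; rfl)
    · exact M.subset_closure B5 hB5E (by right; left; rfl)
    · exact hcl2
    · exact M.subset_closure B5 hB5E (by right; right; rfl)
    · exact hcl4
  have hrF : r M F ≤ 3 := by
    have h1 : r M F ≤ r M B5 := by
      refine r_le_of_subset_closure hB5E ?_
      rw [hF]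
      rintro w ⟨i, hi, rfl⟩
      exact hcovF i (by simpa using hi)
    have h2 : r M B5 ≤ (B5.ncard : ℤ) := r_le_ncard hB5E
    rw [hB5card] at h2
    omega
  -- dual side
  set Bd : Set α := {e 0, e 2, e 4} with hBd
  have hBdF : Bd ⊆ F := by
    rintro w (rfl | rfl | rfl) <;> exact fan_memF hF (by omega)
  have hBdE : Bd ⊆ M.E := hBdF.trans hFE
  have hcld1 : e 1 ∈ M✶.closure Bd := by
    have hc := circuit_mem_closure (M := M✶) h0.1
      (show e 1 ∈ tri e 0 by unfold tri; right; left; rfl)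
    refine M✶.closure_subset_closure ?_ hc
    rintro w ⟨hw, hwne⟩
    simp only [Set.mem_singleton_iff] at hwne
    unfold tri at hw
    rcases hw with rfl | rfl | rfl
    · left; rfl
    · exact absurd rfl hwne
    · right; left; rfl
  have hcld3 : e 3 ∈ M✶.closure Bd := by
    have hc := circuit_mem_closure (M := M✶) htd2.1
      (show e 3 ∈ tri e 2 by unfold tri; right; left; rfl)
    refine M✶.closure_subset_closure ?_ hc
    rintro w ⟨hw, hwne⟩
    simp only [Set.mem_singleton_iff] at hwne
    unfold tri at hw
    rcases hw with rfl | rfl | rfl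
    · right; left; rfl
    · exact absurd rfl hwne
    · right; right; rfl
  have hrdF : r M✶ F ≤ 3 := by
    have h1 : r M✶ F ≤ r M✶ Bd := by
      refine r_le_of_subset_closure (M := M✶) hBdE ?_
      rw [hF]
      rintro w ⟨i, hi, rfl⟩
      simp only [Set.mem_Iio] at hi
      interval_cases i
      · exact M✶.subset_closure Bd hBdE (by left; rfl)
      · exact hcld1
      · exact M✶.subset_closure Bd hBdE (by right; left; rfl)
      · exact hcld3
      · exact M✶.subset_closure Bd hBdE (by right; right; rfl)
    have h2 : r M✶ Bd ≤ (Bd.ncard : ℤ) := r_le_ncard (M := M✶) hBdE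
    have h3 : Bd.ncard = 3 :=
      ncard_triple (fan_ne hord (by omega) (by omega) (by omega))
        (fan_ne hord (by omega) (by omega) (by omega))
        (fan_ne hord (by omega) (by omega) (by omega))
    rw [h3] at h2
    omega
  have hdualF := r_dual (M := M) hFE
  rw [hFn] at hdualF
  have hlamF : lam M F ≤ 1 := by unfold lam; omega
  have hEcompl : (M.E \ F).ncard = M.E.ncard - 5 := by rw [ncard_compl_eq hFE, hFn]
  rcases Nat.lt_or_ge (M.E \ F).ncard 1 with hc0 | hc1
  · -- E = F
    have hEF : M.E = F := by
      have h1 : M.E \ F = ∅ := by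
        rw [← Set.ncard_eq_zero (M.ground_finite.diff (t := F))]
        omega
      exact subset_antisymm (fun w hw => by_contra fun hwF =>
        (h1 ▸ (⟨hw, hwF⟩ : w ∈ M.E \ F) : w ∈ (∅ : Set α))) hFE
    have hrEF : r M F = r M M.E := by
      have h1 : r M F ≤ r M M.E := r_mono hFE
      have h2 : r M M.E ≤ r M F := by rw [hEF]
      omega
    have hlam0 : lam M F = 0 := by
      have := lam_nonneg M hFE
      unfold lam at this ⊢
      have hd : M.E \ F = ∅ := by rw [hEF]; exact Set.diff_self
      rw [hd, r_empty] at this ⊢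
      omega
    have hrE2 : 2 ≤ r M M.E := by
      have hpair : M.Indep {e 0, e 1} := small_indep hM hE4
        (by rintro w (rfl | rfl) <;> exact fan_memE hord (by omega))
        (le_of_eq (Set.ncard_pair (fan_ne hord (by omega) (by omega) (by omega))))
      have h1 := le_r hpair (show ({e 0, e 1} : Set α) ⊆ M.E by
        rintro w (rfl | rfl) <;> exact fan_memE hord (by omega))
      rw [Set.ncard_pair (fan_ne hord (by omega) (by omega) (by omega))] at h1
      exact_mod_cast h1
    have hrE3 : r M M.E ≤ 3 := by omega
    have hEn5 : M.E.ncard = 5 := by rw [hEF, hFn]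
    rcases Nat.lt_or_ge 2 (r M M.E).toNat with hgt | hle
    · -- r = 3, use the dual
      have hr3 : r M M.E = 3 := by
        have := r_nonneg M M.E
        omega
      have hrdE : r M✶ M✶.E = 2 := by
        rw [dual_ground, r_dual_ground M, hr3, hEn5]
        norm_num
      have htdT : Triad M✶ T := triad_dual_iff.2 hT
      have hrdc : r M✶ (M✶.E \ T) = r M✶ M✶.E - 1 := triad_r_compl htdT
      set X2 : Set α := {e 1, e 3} with hX2
      have hX2sub : X2 ⊆ M✶.E \ T := by
        rintro w (rfl | rfl)
        · refine ⟨fan_memE hord (by omega), fun hw => ?_⟩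
          rw [hTeq] at hw
          rcases hw with hw | hw | hw
          · have := hmem 1 0 (by omega) (by omega) hw; omega
          · have := hmem 1 2 (by omega) (by omega) hw; omega
          · have := hmem 1 4 (by omega) (by omega) hw; omega
        · refine ⟨fan_memE hord (by omega), fun hw => ?_⟩
          rw [hTeq] at hw
          rcases hw with hw | hw | hw
          · have := hmem 3 0 (by omega) (by omega) hw; omega
          · have := hmem 3 2 (by omega) (by omega) hw; omega
          · have := hmem 3 4 (by omega) (by omega) hw; omega
      have hX2E : X2 ⊆ M✶.E := hX2sub.trans Set.diff_subset
      have hrX2 : r M✶ X2 ≤ 1 := by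
        have := r_mono (M := M✶) hX2sub
        omega
      have hlamX2 : lam M✶ X2 ≤ 1 := by
        have h1 : r M✶ (M✶.E \ X2) ≤ r M✶ M✶.E := r_mono Set.diff_subset
        unfold lam
        omega
      have hX2card : X2.ncard = 2 := Set.ncard_pair (fan_ne hord (by omega) (by omega) (by omega))
      have hcompl2 : 2 ≤ (M✶.E \ X2).ncard := by
        have := ncard_compl_eq (M := M✶) hX2E
        rw [hX2card] at this
        rw [dual_ground] at this ⊢
        omega
      exact lam_pair_contra (threeConnected_dual hM) hX2E hX2card hcompl2 hlamX2
    · -- r = 2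
      have hr2 : r M M.E = 2 := by
        have := r_nonneg M M.E
        omega
      have hrc : r M (M.E \ tri e 0) = r M M.E - 1 := triad_r_compl h0
      set X2 : Set α := {e 3, e 4} with hX2
      have hX2sub : X2 ⊆ M.E \ tri e 0 := by
        rintro w (rfl | rfl)
        · refine ⟨fan_memE hord (by omega), fun hw => ?_⟩
          unfold tri at hw
          rcases hw with hw | hw | hw
          · have := hmem 3 0 (by omega) (by omega) hw; omega
          · have := hmem 3 1 (by omega) (by omega) hw; omega
          · have := hmem 3 2 (by omega) (by omega) hw; omega
        · refine ⟨fan_memE hord (by omega), fun hw => ?_⟩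
          unfold tri at hw
          rcases hw with hw | hw | hw
          · have := hmem 4 0 (by omega) (by omega) hw; omega
          · have := hmem 4 1 (by omega) (by omega) hw; omega
          · have := hmem 4 2 (by omega) (by omega) hw; omega
      have hX2E : X2 ⊆ M.E := hX2sub.trans Set.diff_subset
      have hrX2 : r M X2 ≤ 1 := by
        have := r_mono (M := M) hX2sub
        omega
      have hlamX2 : lam M X2 ≤ 1 := by
        have h1 : r M (M.E \ X2) ≤ r M M.E := r_mono Set.diff_subset
        unfold lam
        omega
      have hX2card : X2.ncard = 2 := Set.ncard_pair (fan_ne hord (by omega) (by omega) (by omega))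
      have hcompl2 : 2 ≤ (M.E \ X2).ncard := by
        have := ncard_compl_eq (M := M) hX2E
        rw [hX2card] at this
        omega
      exact lam_pair_contra hM hX2E hX2card hcompl2 hlamX2
  · -- |E \ F| ≥ 1
    rcases Nat.lt_or_ge (M.E \ F).ncard 2 with hc1' | hc2
    swap
    · have := lam_lb2 hM hFE (by omega) hc2
      omega
    have hcne : (M.E \ F).ncard = 1 := by omega
    obtain ⟨w, hw⟩ := Set.ncard_eq_one.1 hcne
    have hwE : w ∈ M.E := by
      have : w ∈ M.E \ F := by rw [hw]; rfl
      exact this.1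
    have hwF : w ∉ F := by
      have : w ∈ M.E \ F := by rw [hw]; rfl
      exact this.2
    have hlam1 : lam M F = 1 := by
      have := lam_lb1 hM hFE (by omega) (by omega)
      omega
    have hrwle : r M (M.E \ F) ≤ 1 := by
      rw [hw]
      have := r_le_ncard (M := M) (show {w} ⊆ M.E by simpa using hwE)
      simpa using this
    have hrFE : r M F = r M M.E := by
      have h1 : r M F ≤ r M M.E := r_mono hFE
      unfold lam at hlam1
      omega
    have hwB5 : w ∉ B5 := fun hmem' => hwF (hB5F hmem')
    have hdep : ¬ M.Indep (B5 ∪ {w}) := by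
      intro hind
      have h1 := le_r hind (Set.union_subset hB5E (by simpa using hwE))
      have h2 : (B5 ∪ {w}).ncard = 4 := by
        rw [Set.union_singleton, Set.ncard_insert_of_notMem hwB5 (M.set_finite B5 hB5E),
          hB5card]
      have h3 : r M (B5 ∪ {w}) ≤ r M M.E :=
        r_mono (Set.union_subset hB5E (by simpa using hwE))
      rw [h2] at h1
      push_cast at h1
      omega
    obtain ⟨C, hCsub, hC⟩ := dep_contains_circuit
      (Set.union_subset hB5E (by simpa using hwE)) hdep
    have he3C : e 3 ∉ C := by
      intro h3'
      obtain ⟨y, hyne, hyC, hytd⟩ := circuit_cocircuit_orth hC htd2.1 h3'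
        (by unfold tri; right; left; rfl)
      unfold tri at hytd
      rcases hCsub hyC with (rfl | rfl | rfl) | hyw
      · rcases hytd with hw' | hw' | hw'
        · have := hmem 0 2 (by omega) (by omega) hw'; omega
        · have := hmem 0 3 (by omega) (by omega) hw'; omega
        · have := hmem 0 4 (by omega) (by omega) hw'; omega
      · rcases hytd with hw' | hw' | hw'
        · have := hmem 1 2 (by omega) (by omega) hw'; omega
        · have := hmem 1 3 (by omega) (by omega) hw'; omega
        · have := hmem 1 4 (by omega) (by omega) hw'; omega
      · exact absurd rfl hyne
      · simp only [Set.mem_singleton_iff] at hyw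
        subst hyw
        rcases hytd with hw' | hw' | hw' <;>
          exact hwF (hw' ▸ fan_memF hF (by omega))
    have hCsub' : C ⊆ {w, e 0, e 1} := by
      intro v hv
      rcases hCsub hv with (rfl | rfl | rfl) | hvw
      · right; left; rfl
      · right; right; rfl
      · exact absurd hv he3C
      · simp only [Set.mem_singleton_iff] at hvw
        left; exact hvw
    have hccard := min_circuit hM hE4 hC
    have hwne0 : w ≠ e 0 := fun h => hwF (h ▸ fan_memF hF (by omega))
    have hwne1 : w ≠ e 1 := fun h => hwF (h ▸ fan_memF hF (by omega))
    have htrip : ({w, e 0, e 1} : Set α).ncard = 3 :=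
      ncard_triple hwne0 hwne1 (fan_ne hord (by omega) (by omega) (by omega))
    have hCeq : C = {w, e 0, e 1} := Set.eq_of_subset_of_ncard_le hCsub' (by omega)
    exact fan_extend hM hW hord hF hmax h0 hwE hwF ⟨hCeq ▸ hC, htrip⟩

end Part8

section Part9

variable {M : Matroid α} {n : ℕ} {e : ℕ → α} {F T : Set α} {x : α}

lemma main_half [M.Finite] (hM : ThreeConnected M) (hW : ¬ IsWheelOrWhirl M)
    (hord : FanOrd M n e) (hF : F = e '' Set.Iio n) (hmax : MaximalFan M F)
    (h0 : Triad M (tri e 0)) (hT : Triangle M T) (he0 : e 0 ∈ T) : False := by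
  have h3n := hord.1
  have hmem := fan_hmem hord
  -- orthogonality of T with the triad {e 0, e 1, e 2}
  obtain ⟨y, hyne, hyT, hytd⟩ := circuit_cocircuit_orth hT.1 h0.1 he0
    (show e 0 ∈ tri e 0 by unfold tri; left; rfl)
  unfold tri at hytd
  have he1orhe2 : e 1 ∈ T ∨ e 2 ∈ T := by
    rcases hytd with rfl | rfl | rfl
    · exact absurd rfl hyne
    · exact Or.inl hyT
    · exact Or.inr hyT
  by_cases he1T : e 1 ∈ T
  · exact caseA hM hW hord hF hmax h0 hT he0 he1T
  have he2T : e 2 ∈ T := by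
    rcases he1orhe2 with h | h
    · exact absurd h he1T
    · exact h
  have hne02 : e 0 ≠ e 2 := fan_ne hord (by omega) (by omega) (by omega)
  obtain ⟨x, hxuv, hTeq⟩ := third_elt hT.2 he0 he2T hne02
  have hxE : x ∈ M.E := hT.1.1 (by rw [hTeq]; right; right; rfl)
  have hxne0 : x ≠ e 0 := fun h => hxuv (by rw [h]; left; rfl)
  have hxne2 : x ≠ e 2 := fun h => hxuv (by rw [h]; right; rfl)
  have hxne1 : x ≠ e 1 := fun h => he1T (h ▸ (by rw [hTeq]; right; right; rfl))
  by_cases hn3 : n = 3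
  · -- reorder the length-3 fan as (e 0, e 2, e 1)
    subst hn3
    set e'' : ℕ → α := fun i => if i = 1 then e 2 else if i = 2 then e 1 else e i with he''
    have hv0 : e'' 0 = e 0 := rfl
    have hv1 : e'' 1 = e 2 := rfl
    have hv2 : e'' 2 = e 1 := rfl
    have hts : tri e'' 0 = {e 0, e 2, e 1} := rfl
    have htseq : ({e 0, e 2, e 1} : Set α) = tri e 0 := by
      unfold tri
      ext w
      simp only [Set.mem_insert_iff, Set.mem_singleton_iff]
      constructor
      · rintro (rfl | rfl | rfl)
        · left; rfl
        · right; right; rfl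
        · right; left; rfl
      · rintro (rfl | rfl | rfl)
        · left; rfl
        · right; right; rfl
        · right; left; rfl
    have hord'' : FanOrd M 3 e'' := by
      refine ⟨le_rfl, ?_, ?_, Or.inr (by rw [hts, htseq]; exact h0), fun i hi => by omega⟩
      · intro i hi j hj h
        simp only [Set.mem_Iio] at hi hj
        interval_cases i <;> interval_cases j <;>
          simp only [hv0, hv1, hv2] at h <;>
          first
            | rfl
            | exact absurd h (fan_ne hord (by omega) (by omega) (by omega))
      · intro i hi
        interval_cases i
        · rw [hv0]; exact fan_memE hord (by omega)
        · rw [hv1]; exact fan_memE hord (by omega)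
        · rw [hv2]; exact fan_memE hord (by omega)
    have hF'' : F = e'' '' Set.Iio 3 := by
      rw [hF]
      ext w
      simp only [Set.mem_image, Set.mem_Iio]
      constructor
      · rintro ⟨i, hi, rfl⟩
        interval_cases i
        · exact ⟨0, by omega, hv0⟩
        · exact ⟨2, by omega, hv2⟩
        · exact ⟨1, by omega, hv1⟩
      · rintro ⟨i, hi, rfl⟩
        interval_cases i
        · exact ⟨0, by omega, hv0.symm⟩
        · exact ⟨2, by omega, hv1.symm⟩
        · exact ⟨1, by omega, hv2.symm⟩
    have h0'' : Triad M (tri e'' 0) := by rw [hts, htseq]; exact h0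
    exact caseA hM hW hord'' hF'' hmax h0'' hT he0 he2T
  have h4n : 4 ≤ n := by omega
  have hE4 := fan_E4 hord h4n
  by_cases hx3 : x = e 3
  · exact case_x3 hM hW hord h0 h4n hT (by rw [hTeq, hx3])
  by_cases hxF : x ∈ F
  · -- x = e j for some j ≥ 4
    obtain ⟨j, hj, hxj⟩ : ∃ j, j < n ∧ e j = x := by
      rw [hF] at hxF
      obtain ⟨j, hj, hxj⟩ := hxF
      exact ⟨j, by simpa using hj, hxj⟩
    have hj4 : 4 ≤ j := by
      rcases Nat.lt_or_ge j 4 with hlt | hge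
      · exfalso
        interval_cases j
        · exact hxne0 hxj.symm
        · exact hxne1 hxj.symm
        · exact hxne2 hxj.symm
        · exact hx3 hxj.symm
      · exact hge
    have hn5 : 5 ≤ n := by omega
    have htd2 : Triad M (tri e 2) := (fan_parity hord h0 2 (by omega)).1 rfl
    obtain ⟨y2, hy2ne, hy2T, hy2td⟩ := circuit_cocircuit_orth hT.1 htd2.1
      (show e 2 ∈ T from he2T) (show e 2 ∈ tri e 2 by unfold tri; left; rfl)
    unfold tri at hy2td
    have hj4' : j = 4 := by
      rw [hTeq] at hy2T
      rcases hy2T with rfl | rfl | rfl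
      · exfalso
        rcases hy2td with hw | hw | hw
        · have := hmem 0 2 (by omega) (by omega) hw; omega
        · have := hmem 0 3 (by omega) (by omega) hw; omega
        · have := hmem 0 4 (by omega) (by omega) hw; omega
      · exact absurd rfl hy2ne
      · rw [← hxj] at hy2td
        rcases hy2td with hw | hw | hw
        · have := hmem j 2 (by omega) (by omega) hw; omega
        · have := hmem j 3 (by omega) (by omega) hw; omega
        · have := hmem j 4 (by omega) (by omega) hw; omega
    subst hj4'
    rw [← hxj] at hTeq
    rcases Nat.lt_or_ge n 7 with hn7 | hn7
    · rcases Nat.lt_or_ge n 6 with hn6 | hn6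
      · exact case_n5 hM hW hord hF hmax h0 (by omega) hT hTeq
      · exact case_n6 hM hW hord h0 (by omega) hT hTeq
    · -- n ≥ 7 : orthogonality with the triad tri e 4
      have htd4 : Triad M (tri e 4) := (fan_parity hord h0 4 (by omega)).1 rfl
      obtain ⟨y4, hy4ne, hy4T, hy4td⟩ := circuit_cocircuit_orth hT.1 htd4.1
        (show e 4 ∈ T by rw [hTeq]; right; right; rfl)
        (show e 4 ∈ tri e 4 by unfold tri; left; rfl)
      unfold tri at hy4td
      rw [hTeq] at hy4T
      rcases hy4T with rfl | rfl | rfl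
      · rcases hy4td with hw | hw | hw
        · have := hmem 0 4 (by omega) (by omega) hw; omega
        · have := hmem 0 5 (by omega) (by omega) hw; omega
        · have := hmem 0 6 (by omega) (by omega) hw; omega
      · rcases hy4td with hw | hw | hw
        · have := hmem 2 4 (by omega) (by omega) hw; omega
        · have := hmem 2 5 (by omega) (by omega) hw; omega
        · have := hmem 2 6 (by omega) (by omega) hw; omega
      · exact absurd rfl hy4ne
  · -- x ∉ F
    rcases Nat.lt_or_ge n 5 with hn5 | hn5
    swap
    · -- n ≥ 5 : orthogonality of T with tri e 2 forces x ∈ F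
      have htd2 : Triad M (tri e 2) := (fan_parity hord h0 2 (by omega)).1 rfl
      obtain ⟨y2, hy2ne, hy2T, hy2td⟩ := circuit_cocircuit_orth hT.1 htd2.1
        (show e 2 ∈ T from he2T) (show e 2 ∈ tri e 2 by unfold tri; left; rfl)
      unfold tri at hy2td
      rw [hTeq] at hy2T
      rcases hy2T with rfl | rfl | rfl
      · rcases hy2td with hw | hw | hw
        · have := hmem 0 2 (by omega) (by omega) hw; omega
        · have := hmem 0 3 (by omega) (by omega) hw; omega
        · have := hmem 0 4 (by omega) (by omega) hw; omega
      · exact absurd rfl hy2ne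
      · rcases hy2td with hw | hw | hw <;>
          exact hxF (hw ▸ fan_memF hF (by omega))
    -- n = 4 : extend via the ordering (x, e 0, e 2, e 1, e 3)
    have hn4 : n = 4 := by omega
    subst hn4
    set e3 : ℕ → α := fun i =>
      if i = 0 then x else if i = 1 then e 0 else if i = 2 then e 2
      else if i = 3 then e 1 else e 3 with he3
    have hv0 : e3 0 = x := rfl
    have hv1 : e3 1 = e 0 := rfl
    have hv2 : e3 2 = e 2 := rfl
    have hv3 : e3 3 = e 1 := rfl
    have hv4 : e3 4 = e 3 := rfl
    have ht0 : tri e3 0 = {x, e 0, e 2} := rfl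
    have ht1 : tri e3 1 = {e 0, e 2, e 1} := rfl
    have ht2 : tri e3 2 = {e 2, e 1, e 3} := rfl
    have hseqT : ({x, e 0, e 2} : Set α) = T := by
      rw [hTeq]
      ext w
      simp only [Set.mem_insert_iff, Set.mem_singleton_iff]
      tauto
    have hseq1 : ({e 0, e 2, e 1} : Set α) = tri e 0 := by
      unfold tri
      ext w
      simp only [Set.mem_insert_iff, Set.mem_singleton_iff]
      tauto
    have hseq2 : ({e 2, e 1, e 3} : Set α) = tri e 1 := by
      unfold tri
      ext w
      simp only [Set.mem_insert_iff, Set.mem_singleton_iff]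
      tauto
    have htr1 : Triangle M (tri e 1) := (fan_parity hord h0 1 (by omega)).2 rfl
    have hxne : ∀ k, k < 4 → x ≠ e k := fun k hk h => hxF (h ▸ fan_memF hF hk)
    have hford : FanOrd M 5 e3 := by
      refine ⟨by omega, ?_, ?_, Or.inl (by rw [ht0, hseqT]; exact hT), ?_⟩
      · intro i hi j hj h
        simp only [Set.mem_Iio] at hi hj
        interval_cases i <;> interval_cases j <;>
          simp only [hv0, hv1, hv2, hv3, hv4] at h <;>
          first
            | rfl
            | exact absurd h (hxne _ (by omega))
            | exact absurd h.symm (hxne _ (by omega))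
            | exact absurd h (fan_ne hord (by omega) (by omega) (by omega))
      · intro i hi
        interval_cases i
        · rw [hv0]; exact hxE
        · rw [hv1]; exact fan_memE hord (by omega)
        · rw [hv2]; exact fan_memE hord (by omega)
        · rw [hv3]; exact fan_memE hord (by omega)
        · rw [hv4]; exact fan_memE hord (by omega)
      · intro i hi
        have hi' : i < 2 := by omega
        interval_cases i
        · rw [ht0, ht1, hseqT, hseq1]
          exact ⟨fun _ => h0, fun htd' => (both_contra hM hW hT htd').elim⟩
        · rw [ht1, ht2, hseq1, hseq2]
          exact ⟨fun htr' => (both_contra hM hW htr' h0).elim, fun _ => htr1⟩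
    have hsub : F ⊆ e3 '' Set.Iio 5 := by
      rw [hF]
      rintro w ⟨i, hi, rfl⟩
      simp only [Set.mem_Iio] at hi
      interval_cases i
      · exact ⟨1, by simp, hv1⟩
      · exact ⟨3, by simp, hv3⟩
      · exact ⟨2, by simp, hv2⟩
      · exact ⟨4, by simp, hv4⟩
    have heq := hmax.2 _ (Or.inr ⟨5, e3, hford, rfl⟩) hsub
    exact hxF (by rw [← heq]; exact ⟨0, by simp, hv0⟩)

end Part9

section Part10

variable {M : Matroid α} {n : ℕ} {e : ℕ → α} {F : Set α}

lemma fanOrd_dual (hord : FanOrd M n e) : FanOrd M✶ n e := by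
  obtain ⟨h1, h2, h3, h4, h5⟩ := hord
  refine ⟨h1, h2, fun i hi => by rw [dual_ground]; exact h3 i hi, ?_, ?_⟩
  · rcases h4 with h | h
    · exact Or.inr (triad_dual_iff.2 h)
    · exact Or.inl (triangle_dual_iff.2 h)
  · intro i hi
    obtain ⟨ha, hb⟩ := h5 i hi
    exact ⟨fun h => triad_dual_iff.2 (hb (triangle_dual_iff.1 h)),
      fun h => triangle_dual_iff.2 (ha (triad_dual_iff.1 h))⟩

lemma isFan_dual (h : IsFan M F) : IsFan M✶ F := by
  rcases h with ⟨hsub, hcard⟩ | ⟨n', e', hord', rfl⟩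
  · exact Or.inl ⟨by rw [dual_ground]; exact hsub, hcard⟩
  · exact Or.inr ⟨n', e', fanOrd_dual hord', rfl⟩

lemma maximalFan_dual (h : MaximalFan M F) : MaximalFan M✶ F := by
  refine ⟨isFan_dual h.1, fun F' hF' hsub => h.2 F' ?_ hsub⟩
  have := isFan_dual (M := M✶) hF'
  rwa [Matroid.dual_dual] at this

end Part10

/-- Ends of a maximal fan in a 3-connected matroid that is not a wheel or whirl:
if the first triple is a triad then the first element is in no triangle, and
dually. -/
theorem stmt6 (M : Matroid α) [M.Finite] (hM : ThreeConnected M)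
    (hW : ¬ IsWheelOrWhirl M) {n : ℕ} {e : ℕ → α} {F : Set α}
    (hord : FanOrd M n e) (hF : F = e '' Set.Iio n) (hmax : MaximalFan M F) :
    (Triad M {e 0, e 1, e 2} → ∀ T, Triangle M T → e 0 ∉ T) ∧
    (Triangle M {e 0, e 1, e 2} → ∀ T, Triad M T → e 0 ∉ T) := by
  constructor
  · intro htd T hT he0T
    exact main_half hM hW hord hF hmax htd hT he0T
  · intro htr T hTd he0T
    exact main_half (M := M✶) (threeConnected_dual hM) (fun h => hW (wheel_dual h))
      (fanOrd_dual hord) hF (maximalFan_dual hmax) (triad_dual_iff.2 htr)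
      (triangle_dual_iff.2 hTd) he0T
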